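/- arXiv:2106.14884 — 5 statements merged into one kernel-verified Lean document; each statement's English description precedes it below -/
import Mathlib

section
/- There exists an algebra automorphism σ of 𝒰_q^+ sending 𝒲_{−k} ↦ 𝒲_{k+1}, 𝒲_{k+1} ↦ 𝒲_{−k}, 𝒢_{k+1} ↦ 𝒢̃_{k+1}, 𝒢̃_{k+1} ↦ 𝒢_{k+1} for all k ∈ ℕ, with σ² = id; there exists an antiautomorphism † of 𝒰_q^+ (an algebra isomorphism onto the opposite algebra) fixing each 𝒲_{−k} and 𝒲_{k+1} and sending 𝒢_{k+1} ↦ 𝒢̃_{k+1}, 𝒢̃_{k+1} ↦ 𝒢_{k+1} for all k ∈ ℕ, with †² = id; moreover σ and † commute. -/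
noncomputable section

/-- The commutator `[X,Y] = XY - YX`. -/
def br {A : Type*} [Ring A] (X Y : A) : A := X * Y - Y * X

/-- The `q`-commutator `[X,Y]_q = q·XY - q⁻¹·YX`. -/
def qbr {F : Type*} [Field F] (q : F) {A : Type*} [Ring A] [Algebra F A] (X Y : A) : A :=
  q • (X * Y) - q⁻¹ • (Y * X)

/-- The element `E_δ = q⁻² W₁ W₀ - W₀ W₁`. -/
def Edel {F : Type*} [Field F] (q : F) {A : Type*} [Ring A] [Algebra F A] (W0 W1 : A) : A :=
  (q ^ 2)⁻¹ • (W1 * W0) - W0 * W1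

/-- The elements `E_{nδ+α₀}`. -/
def Em {F : Type*} [Field F] (q : F) {A : Type*} [Ring A] [Algebra F A] (W0 W1 : A) : ℕ → A
  | 0 => W0
  | n + 1 => (q + q⁻¹)⁻¹ • br (Edel q W0 W1) (Em q W0 W1 n)

/-- The elements `E_{nδ+α₁}`. -/
def Ep {F : Type*} [Field F] (q : F) {A : Type*} [Ring A] [Algebra F A] (W0 W1 : A) : ℕ → A
  | 0 => W1
  | n + 1 => (q + q⁻¹)⁻¹ • br (Ep q W0 W1 n) (Edel q W0 W1)

/-- The elements `E_{nδ}` (with `E_{0δ} = -(q-q⁻¹)⁻¹`). -/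
def Ed {F : Type*} [Field F] (q : F) {A : Type*} [Ring A] [Algebra F A] (W0 W1 : A) : ℕ → A
  | 0 => (-(q - q⁻¹)⁻¹) • (1 : A)
  | n + 1 => (q ^ 2)⁻¹ • (Ep q W0 W1 n * W0) - W0 * Ep q W0 W1 n

/-- The generating function with coefficients `a n`. -/
def ser {A : Type*} [Ring A] (a : ℕ → A) : PowerSeries A := PowerSeries.mk a

/-- The rescaled generating function `a(ct)`. -/
def serc {F : Type*} [Field F] {A : Type*} [Ring A] [Algebra F A] (c : F) (a : ℕ → A) :
    PowerSeries A := PowerSeries.mk fun n => c ^ n • a n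

/-- The generating function `a(s)` in the first variable `s`. -/
def serS {A : Type*} [Ring A] (a : ℕ → A) : PowerSeries (PowerSeries A) :=
  PowerSeries.C (R := PowerSeries A) (PowerSeries.mk a)

/-- The generating function `a(t)` in the second variable `t`. -/
def serT {A : Type*} [Ring A] (a : ℕ → A) : PowerSeries (PowerSeries A) :=
  PowerSeries.mk fun n => PowerSeries.C (R := A) (a n)

/-- The rescaled generating function `a(ct)` in the second variable `t`. -/
def serTc {F : Type*} [Field F] {A : Type*} [Ring A] [Algebra F A] (c : F) (a : ℕ → A) :
    PowerSeries (PowerSeries A) := PowerSeries.mk fun n => PowerSeries.C (R := A) (c ^ n • a n)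

/-- The variable `s` viewed in the two-variable power series ring. -/
def sVar (A : Type*) [Ring A] : PowerSeries (PowerSeries A) :=
  PowerSeries.C (R := PowerSeries A) PowerSeries.X

/-- The variable `t` viewed in the two-variable power series ring. -/
def tVar (A : Type*) [Ring A] : PowerSeries (PowerSeries A) := PowerSeries.X

/-- Generators of the alternating central extension: `wm k = 𝒲_{-k}`, `wp k = 𝒲_{k+1}`,
`g k = 𝒢_{k+1}`, `gt k = 𝒢̃_{k+1}`. -/
inductive AGen : Type
  | wm : ℕ → AGen
  | wp : ℕ → AGen
  | g : ℕ → AGen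
  | gt : ℕ → AGen

/-- `𝒲_{-k}` in the free algebra. -/
def fWm (F : Type*) [Field F] (k : ℕ) : FreeAlgebra F AGen := FreeAlgebra.ι F (AGen.wm k)

/-- `𝒲_{k+1}` in the free algebra. -/
def fWp (F : Type*) [Field F] (k : ℕ) : FreeAlgebra F AGen := FreeAlgebra.ι F (AGen.wp k)

/-- `𝒢_{k+1}` in the free algebra. -/
def fG (F : Type*) [Field F] (k : ℕ) : FreeAlgebra F AGen := FreeAlgebra.ι F (AGen.g k)

/-- `𝒢̃_{k+1}` in the free algebra. -/
def fGt (F : Type*) [Field F] (k : ℕ) : FreeAlgebra F AGen := FreeAlgebra.ι F (AGen.gt k)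

/-- The defining relations of the alternating central extension `𝒰_q^+`. -/
inductive URel (F : Type*) [Field F] (q : F) :
    FreeAlgebra F AGen → FreeAlgebra F AGen → Prop
  | r1 (k : ℕ) : URel F q (br (fWm F 0) (fWp F k)) ((1 - (q ^ 2)⁻¹) • (fGt F k - fG F k))
  | r2 (k : ℕ) : URel F q (br (fWm F k) (fWp F 0)) ((1 - (q ^ 2)⁻¹) • (fGt F k - fG F k))
  | r3 (k : ℕ) : URel F q (qbr q (fWm F 0) (fG F k)) ((q - q⁻¹) • fWm F (k + 1))
  | r4 (k : ℕ) : URel F q (qbr q (fGt F k) (fWm F 0)) ((q - q⁻¹) • fWm F (k + 1))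
  | r5 (k : ℕ) : URel F q (qbr q (fG F k) (fWp F 0)) ((q - q⁻¹) • fWp F (k + 1))
  | r6 (k : ℕ) : URel F q (qbr q (fWp F 0) (fGt F k)) ((q - q⁻¹) • fWp F (k + 1))
  | r7 (k l : ℕ) : URel F q (br (fWm F k) (fWm F l)) 0
  | r8 (k l : ℕ) : URel F q (br (fWp F k) (fWp F l)) 0
  | r9 (k l : ℕ) : URel F q (br (fWm F k) (fWp F l) + br (fWp F k) (fWm F l)) 0
  | r10 (k l : ℕ) : URel F q (br (fWm F k) (fG F l) + br (fG F k) (fWm F l)) 0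
  | r11 (k l : ℕ) : URel F q (br (fWm F k) (fGt F l) + br (fGt F k) (fWm F l)) 0
  | r12 (k l : ℕ) : URel F q (br (fWp F k) (fG F l) + br (fG F k) (fWp F l)) 0
  | r13 (k l : ℕ) : URel F q (br (fWp F k) (fGt F l) + br (fGt F k) (fWp F l)) 0
  | r14 (k l : ℕ) : URel F q (br (fG F k) (fG F l)) 0
  | r15 (k l : ℕ) : URel F q (br (fGt F k) (fGt F l)) 0
  | r16 (k l : ℕ) : URel F q (br (fGt F k) (fG F l) + br (fG F k) (fGt F l)) 0

/-- The alternating central extension `𝒰_q^+`, presented by the alternating generators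
and the relations `URel`. -/
def Ualt (F : Type*) [Field F] (q : F) : Type _ := RingQuot (URel F q)

instance (F : Type*) [Field F] (q : F) : Ring (Ualt F q) :=
  inferInstanceAs (Ring (RingQuot (URel F q)))

instance (F : Type*) [Field F] (q : F) : Algebra F (Ualt F q) :=
  inferInstanceAs (Algebra F (RingQuot (URel F q)))

/-- The generator `𝒲_{-k}` of `𝒰_q^+`. -/
def uWm (F : Type*) [Field F] (q : F) (k : ℕ) : Ualt F q :=
  RingQuot.mkAlgHom F (URel F q) (fWm F k)

/-- The generator `𝒲_{k+1}` of `𝒰_q^+`. -/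
def uWp (F : Type*) [Field F] (q : F) (k : ℕ) : Ualt F q :=
  RingQuot.mkAlgHom F (URel F q) (fWp F k)

/-- The elements `𝒢_k` of `𝒰_q^+` (with `𝒢₀ = 1`). -/
def uG (F : Type*) [Field F] (q : F) : ℕ → Ualt F q
  | 0 => 1
  | k + 1 => RingQuot.mkAlgHom F (URel F q) (fG F k)

/-- The elements `𝒢̃_k` of `𝒰_q^+` (with `𝒢̃₀ = 1`). -/
def uGt (F : Type*) [Field F] (q : F) : ℕ → Ualt F q
  | 0 => 1
  | k + 1 => RingQuot.mkAlgHom F (URel F q) (fGt F k)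

/-- The ordered product of a family of elements over a multiset of indices,
the indices being sorted in nondecreasing order. -/
def msProd {A : Type*} [Monoid A] (f : ℕ → A) (m : Multiset ℕ) : A :=
  ((m.sort (· ≤ ·)).map f).prod

namespace Stmt5Aux
open MulOpposite

/-- generator swap for σ -/
def sGen : AGen → AGen
  | .wm k => .wp k
  | .wp k => .wm k
  | .g k => .gt k
  | .gt k => .g k

/-- generator swap for dagger -/
def dGen : AGen → AGen
  | .wm k => .wm k
  | .wp k => .wp k
  | .g k => .gt k
  | .gt k => .g k

variable {F : Type*} [Field F] (q : F)

/-- σ on the free algebra. -/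
def σfree (F : Type*) [Field F] : FreeAlgebra F AGen →ₐ[F] FreeAlgebra F AGen :=
  FreeAlgebra.lift F fun g => FreeAlgebra.ι F (sGen g)

@[simp] lemma σfree_ι (g : AGen) :
    σfree F (FreeAlgebra.ι F g) = FreeAlgebra.ι F (sGen g) := by
  simp [σfree]

lemma σrel ⦃x y : FreeAlgebra F AGen⦄ (h : URel F q x y) :
    ((RingQuot.mkAlgHom F (URel F q)).comp (σfree F)) x
      = ((RingQuot.mkAlgHom F (URel F q)).comp (σfree F)) y := by
  have rel : ∀ {a b}, URel F q a b →
      RingQuot.mkAlgHom F (URel F q) a = RingQuot.mkAlgHom F (URel F q) b :=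
    fun h => RingQuot.mkAlgHom_rel F h
  induction h with
  | r1 k =>
      have h := rel (URel.r2 (F := F) (q := q) k)
      simp only [br, qbr, map_sub, map_add, map_smul, map_mul, map_zero, AlgHom.comp_apply,
        σfree_ι, fWm, fWp, fG, fGt, sGen] at h ⊢
      linear_combination (norm := module) -h
  | r2 k =>
      have h := rel (URel.r1 (F := F) (q := q) k)
      simp only [br, qbr, map_sub, map_add, map_smul, map_mul, map_zero, AlgHom.comp_apply,
        σfree_ι, fWm, fWp, fG, fGt, sGen] at h ⊢
      linear_combination (norm := module) -h
  | r3 k =>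
      have h := rel (URel.r6 (F := F) (q := q) k)
      simp only [br, qbr, map_sub, map_add, map_smul, map_mul, map_zero, AlgHom.comp_apply,
        σfree_ι, fWm, fWp, fG, fGt, sGen] at h ⊢
      linear_combination (norm := module) h
  | r4 k =>
      have h := rel (URel.r5 (F := F) (q := q) k)
      simp only [br, qbr, map_sub, map_add, map_smul, map_mul, map_zero, AlgHom.comp_apply,
        σfree_ι, fWm, fWp, fG, fGt, sGen] at h ⊢
      linear_combination (norm := module) h
  | r5 k =>
      have h := rel (URel.r4 (F := F) (q := q) k)
      simp only [br, qbr, map_sub, map_add, map_smul, map_mul, map_zero, AlgHom.comp_apply,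
        σfree_ι, fWm, fWp, fG, fGt, sGen] at h ⊢
      linear_combination (norm := module) h
  | r6 k =>
      have h := rel (URel.r3 (F := F) (q := q) k)
      simp only [br, qbr, map_sub, map_add, map_smul, map_mul, map_zero, AlgHom.comp_apply,
        σfree_ι, fWm, fWp, fG, fGt, sGen] at h ⊢
      linear_combination (norm := module) h
  | r7 k l =>
      have h := rel (URel.r8 (F := F) (q := q) k l)
      simp only [br, qbr, map_sub, map_add, map_smul, map_mul, map_zero, AlgHom.comp_apply,
        σfree_ι, fWm, fWp, fG, fGt, sGen] at h ⊢
      linear_combination (norm := module) h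
  | r8 k l =>
      have h := rel (URel.r7 (F := F) (q := q) k l)
      simp only [br, qbr, map_sub, map_add, map_smul, map_mul, map_zero, AlgHom.comp_apply,
        σfree_ι, fWm, fWp, fG, fGt, sGen] at h ⊢
      linear_combination (norm := module) h
  | r9 k l =>
      have h := rel (URel.r9 (F := F) (q := q) k l)
      simp only [br, qbr, map_sub, map_add, map_smul, map_mul, map_zero, AlgHom.comp_apply,
        σfree_ι, fWm, fWp, fG, fGt, sGen] at h ⊢
      linear_combination (norm := module) h
  | r10 k l =>
      have h := rel (URel.r13 (F := F) (q := q) k l)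
      simp only [br, qbr, map_sub, map_add, map_smul, map_mul, map_zero, AlgHom.comp_apply,
        σfree_ι, fWm, fWp, fG, fGt, sGen] at h ⊢
      linear_combination (norm := module) h
  | r11 k l =>
      have h := rel (URel.r12 (F := F) (q := q) k l)
      simp only [br, qbr, map_sub, map_add, map_smul, map_mul, map_zero, AlgHom.comp_apply,
        σfree_ι, fWm, fWp, fG, fGt, sGen] at h ⊢
      linear_combination (norm := module) h
  | r12 k l =>
      have h := rel (URel.r11 (F := F) (q := q) k l)
      simp only [br, qbr, map_sub, map_add, map_smul, map_mul, map_zero, AlgHom.comp_apply,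
        σfree_ι, fWm, fWp, fG, fGt, sGen] at h ⊢
      linear_combination (norm := module) h
  | r13 k l =>
      have h := rel (URel.r10 (F := F) (q := q) k l)
      simp only [br, qbr, map_sub, map_add, map_smul, map_mul, map_zero, AlgHom.comp_apply,
        σfree_ι, fWm, fWp, fG, fGt, sGen] at h ⊢
      linear_combination (norm := module) h
  | r14 k l =>
      have h := rel (URel.r15 (F := F) (q := q) k l)
      simp only [br, qbr, map_sub, map_add, map_smul, map_mul, map_zero, AlgHom.comp_apply,
        σfree_ι, fWm, fWp, fG, fGt, sGen] at h ⊢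
      linear_combination (norm := module) h
  | r15 k l =>
      have h := rel (URel.r14 (F := F) (q := q) k l)
      simp only [br, qbr, map_sub, map_add, map_smul, map_mul, map_zero, AlgHom.comp_apply,
        σfree_ι, fWm, fWp, fG, fGt, sGen] at h ⊢
      linear_combination (norm := module) h
  | r16 k l =>
      have h := rel (URel.r16 (F := F) (q := q) k l)
      simp only [br, qbr, map_sub, map_add, map_smul, map_mul, map_zero, AlgHom.comp_apply,
        σfree_ι, fWm, fWp, fG, fGt, sGen] at h ⊢
      linear_combination (norm := module) h


/-- dagger on the free algebra, into the opposite of the quotient. -/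
def dhom (F : Type*) [Field F] (q : F) : FreeAlgebra F AGen →ₐ[F] (Ualt F q)ᵐᵒᵖ :=
  FreeAlgebra.lift F fun g =>
    op (RingQuot.mkAlgHom F (URel F q) (FreeAlgebra.ι F (dGen g)))

@[simp] lemma dhom_ι (g : AGen) :
    dhom F q (FreeAlgebra.ι F g)
      = op (α := Ualt F q) (RingQuot.mkAlgHom F (URel F q) (FreeAlgebra.ι F (dGen g))) := by
  simp [dhom]

lemma unop_op_U (x : RingQuot (URel F q)) : unop (op (α := Ualt F q) x) = x := rfl

lemma U_mul (a : RingQuot (URel F q)) (b : RingQuot (URel F q)) :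
    @HMul.hMul (RingQuot (URel F q)) (RingQuot (URel F q)) (RingQuot (URel F q)) _ a b = @HMul.hMul (Ualt F q) (Ualt F q) (Ualt F q) _ a b := rfl

lemma U_mulUU (a : Ualt F q) (b : Ualt F q) :
    @HMul.hMul (RingQuot (URel F q)) (RingQuot (URel F q)) (RingQuot (URel F q)) _ a b = @HMul.hMul (Ualt F q) (Ualt F q) (Ualt F q) _ a b := rfl

lemma U_mulUR (a : Ualt F q) (b : RingQuot (URel F q)) :
    @HMul.hMul (RingQuot (URel F q)) (RingQuot (URel F q)) (RingQuot (URel F q)) _ a b = @HMul.hMul (Ualt F q) (Ualt F q) (Ualt F q) _ a b := rfl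

lemma U_mulRU (a : RingQuot (URel F q)) (b : Ualt F q) :
    @HMul.hMul (RingQuot (URel F q)) (RingQuot (URel F q)) (RingQuot (URel F q)) _ a b = @HMul.hMul (Ualt F q) (Ualt F q) (Ualt F q) _ a b := rfl

lemma U_sub (a : RingQuot (URel F q)) (b : RingQuot (URel F q)) :
    @HSub.hSub (RingQuot (URel F q)) (RingQuot (URel F q)) (RingQuot (URel F q)) _ a b = @HSub.hSub (Ualt F q) (Ualt F q) (Ualt F q) _ a b := rfl

lemma U_subUU (a : Ualt F q) (b : Ualt F q) :
    @HSub.hSub (RingQuot (URel F q)) (RingQuot (URel F q)) (RingQuot (URel F q)) _ a b = @HSub.hSub (Ualt F q) (Ualt F q) (Ualt F q) _ a b := rfl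

lemma U_subUR (a : Ualt F q) (b : RingQuot (URel F q)) :
    @HSub.hSub (RingQuot (URel F q)) (RingQuot (URel F q)) (RingQuot (URel F q)) _ a b = @HSub.hSub (Ualt F q) (Ualt F q) (Ualt F q) _ a b := rfl

lemma U_subRU (a : RingQuot (URel F q)) (b : Ualt F q) :
    @HSub.hSub (RingQuot (URel F q)) (RingQuot (URel F q)) (RingQuot (URel F q)) _ a b = @HSub.hSub (Ualt F q) (Ualt F q) (Ualt F q) _ a b := rfl

lemma U_add (a : RingQuot (URel F q)) (b : RingQuot (URel F q)) :
    @HAdd.hAdd (RingQuot (URel F q)) (RingQuot (URel F q)) (RingQuot (URel F q)) _ a b = @HAdd.hAdd (Ualt F q) (Ualt F q) (Ualt F q) _ a b := rfl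

lemma U_addUU (a : Ualt F q) (b : Ualt F q) :
    @HAdd.hAdd (RingQuot (URel F q)) (RingQuot (URel F q)) (RingQuot (URel F q)) _ a b = @HAdd.hAdd (Ualt F q) (Ualt F q) (Ualt F q) _ a b := rfl

lemma U_addUR (a : Ualt F q) (b : RingQuot (URel F q)) :
    @HAdd.hAdd (RingQuot (URel F q)) (RingQuot (URel F q)) (RingQuot (URel F q)) _ a b = @HAdd.hAdd (Ualt F q) (Ualt F q) (Ualt F q) _ a b := rfl

lemma U_addRU (a : RingQuot (URel F q)) (b : Ualt F q) :
    @HAdd.hAdd (RingQuot (URel F q)) (RingQuot (URel F q)) (RingQuot (URel F q)) _ a b = @HAdd.hAdd (Ualt F q) (Ualt F q) (Ualt F q) _ a b := rfl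

lemma U_smul (c : F) (a : RingQuot (URel F q)) :
    @HSMul.hSMul F (RingQuot (URel F q)) (RingQuot (URel F q)) _ c a = @HSMul.hSMul F (Ualt F q) (Ualt F q) _ c a := rfl

lemma U_smulU (c : F) (a : Ualt F q) :
    @HSMul.hSMul F (RingQuot (URel F q)) (RingQuot (URel F q)) _ c a = @HSMul.hSMul F (Ualt F q) (Ualt F q) _ c a := rfl

lemma U_zero : (0 : RingQuot (URel F q)) = (0 : Ualt F q) := rfl

lemma U_eq (a b : RingQuot (URel F q)) : a = b ↔ @Eq (Ualt F q) a b := Iff.rfl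

lemma U_eqU (a b : Ualt F q) : @Eq (RingQuot (URel F q)) a b ↔ @Eq (Ualt F q) a b := Iff.rfl

lemma drel ⦃x y : FreeAlgebra F AGen⦄ (h : URel F q x y) :
    dhom F q x = dhom F q y := by
  have rel : ∀ {a b}, URel F q a b →
      RingQuot.mkAlgHom F (URel F q) a = RingQuot.mkAlgHom F (URel F q) b :=
    fun h => RingQuot.mkAlgHom_rel F h
  induction h with
  | r1 k =>
      have h := rel (URel.r1 (F := F) (q := q) k)
      simp only [br, qbr, map_sub, map_add, map_smul, map_mul, map_zero, dhom_ι, fWm, fWp, fG, fGt, dGen, U_mul, U_mulUU, U_mulUR, U_mulRU, U_sub, U_subUU, U_subUR, U_subRU, U_add, U_addUU, U_addUR, U_addRU, U_smul, U_smulU, U_zero, U_eq, U_eqU] at h ⊢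
      apply unop_injective
      simp only [unop_mul, unop_sub, unop_add, unop_smul, unop_op_U, unop_zero]
      exact (neg_sub _ _).symm.trans ((congrArg Neg.neg h).trans (by rw [← smul_neg]; exact congrArg _ (neg_sub _ _)))
  | r2 k =>
      have h := rel (URel.r2 (F := F) (q := q) k)
      simp only [br, qbr, map_sub, map_add, map_smul, map_mul, map_zero, dhom_ι, fWm, fWp, fG, fGt, dGen, U_mul, U_mulUU, U_mulUR, U_mulRU, U_sub, U_subUU, U_subUR, U_subRU, U_add, U_addUU, U_addUR, U_addRU, U_smul, U_smulU, U_zero, U_eq, U_eqU] at h ⊢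
      apply unop_injective
      simp only [unop_mul, unop_sub, unop_add, unop_smul, unop_op_U, unop_zero]
      exact (neg_sub _ _).symm.trans ((congrArg Neg.neg h).trans (by rw [← smul_neg]; exact congrArg _ (neg_sub _ _)))
  | r3 k =>
      have h := rel (URel.r4 (F := F) (q := q) k)
      simp only [br, qbr, map_sub, map_add, map_smul, map_mul, map_zero, dhom_ι, fWm, fWp, fG, fGt, dGen, U_mul, U_mulUU, U_mulUR, U_mulRU, U_sub, U_subUU, U_subUR, U_subRU, U_add, U_addUU, U_addUR, U_addRU, U_smul, U_smulU, U_zero, U_eq, U_eqU] at h ⊢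
      apply unop_injective
      simp only [unop_mul, unop_sub, unop_add, unop_smul, unop_op_U, unop_zero]
      linear_combination (norm := module) h
  | r4 k =>
      have h := rel (URel.r3 (F := F) (q := q) k)
      simp only [br, qbr, map_sub, map_add, map_smul, map_mul, map_zero, dhom_ι, fWm, fWp, fG, fGt, dGen, U_mul, U_mulUU, U_mulUR, U_mulRU, U_sub, U_subUU, U_subUR, U_subRU, U_add, U_addUU, U_addUR, U_addRU, U_smul, U_smulU, U_zero, U_eq, U_eqU] at h ⊢
      apply unop_injective
      simp only [unop_mul, unop_sub, unop_add, unop_smul, unop_op_U, unop_zero]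
      linear_combination (norm := module) h
  | r5 k =>
      have h := rel (URel.r6 (F := F) (q := q) k)
      simp only [br, qbr, map_sub, map_add, map_smul, map_mul, map_zero, dhom_ι, fWm, fWp, fG, fGt, dGen, U_mul, U_mulUU, U_mulUR, U_mulRU, U_sub, U_subUU, U_subUR, U_subRU, U_add, U_addUU, U_addUR, U_addRU, U_smul, U_smulU, U_zero, U_eq, U_eqU] at h ⊢
      apply unop_injective
      simp only [unop_mul, unop_sub, unop_add, unop_smul, unop_op_U, unop_zero]
      linear_combination (norm := module) h
  | r6 k =>
      have h := rel (URel.r5 (F := F) (q := q) k)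
      simp only [br, qbr, map_sub, map_add, map_smul, map_mul, map_zero, dhom_ι, fWm, fWp, fG, fGt, dGen, U_mul, U_mulUU, U_mulUR, U_mulRU, U_sub, U_subUU, U_subUR, U_subRU, U_add, U_addUU, U_addUR, U_addRU, U_smul, U_smulU, U_zero, U_eq, U_eqU] at h ⊢
      apply unop_injective
      simp only [unop_mul, unop_sub, unop_add, unop_smul, unop_op_U, unop_zero]
      linear_combination (norm := module) h
  | r7 k l =>
      have h := rel (URel.r7 (F := F) (q := q) l k)
      simp only [br, qbr, map_sub, map_add, map_smul, map_mul, map_zero, dhom_ι, fWm, fWp, fG, fGt, dGen, U_mul, U_mulUU, U_mulUR, U_mulRU, U_sub, U_subUU, U_subUR, U_subRU, U_add, U_addUU, U_addUR, U_addRU, U_smul, U_smulU, U_zero, U_eq, U_eqU] at h ⊢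
      apply unop_injective
      simp only [unop_mul, unop_sub, unop_add, unop_smul, unop_op_U, unop_zero]
      linear_combination (norm := module) h
  | r8 k l =>
      have h := rel (URel.r8 (F := F) (q := q) l k)
      simp only [br, qbr, map_sub, map_add, map_smul, map_mul, map_zero, dhom_ι, fWm, fWp, fG, fGt, dGen, U_mul, U_mulUU, U_mulUR, U_mulRU, U_sub, U_subUU, U_subUR, U_subRU, U_add, U_addUU, U_addUR, U_addRU, U_smul, U_smulU, U_zero, U_eq, U_eqU] at h ⊢
      apply unop_injective
      simp only [unop_mul, unop_sub, unop_add, unop_smul, unop_op_U, unop_zero]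
      linear_combination (norm := module) h
  | r9 k l =>
      have h := rel (URel.r9 (F := F) (q := q) l k)
      simp only [br, qbr, map_sub, map_add, map_smul, map_mul, map_zero, dhom_ι, fWm, fWp, fG, fGt, dGen, U_mul, U_mulUU, U_mulUR, U_mulRU, U_sub, U_subUU, U_subUR, U_subRU, U_add, U_addUU, U_addUR, U_addRU, U_smul, U_smulU, U_zero, U_eq, U_eqU] at h ⊢
      apply unop_injective
      simp only [unop_mul, unop_sub, unop_add, unop_smul, unop_op_U, unop_zero]
      linear_combination (norm := module) h
  | r10 k l =>
      have h := rel (URel.r11 (F := F) (q := q) l k)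
      simp only [br, qbr, map_sub, map_add, map_smul, map_mul, map_zero, dhom_ι, fWm, fWp, fG, fGt, dGen, U_mul, U_mulUU, U_mulUR, U_mulRU, U_sub, U_subUU, U_subUR, U_subRU, U_add, U_addUU, U_addUR, U_addRU, U_smul, U_smulU, U_zero, U_eq, U_eqU] at h ⊢
      apply unop_injective
      simp only [unop_mul, unop_sub, unop_add, unop_smul, unop_op_U, unop_zero]
      linear_combination (norm := module) h
  | r11 k l =>
      have h := rel (URel.r10 (F := F) (q := q) l k)
      simp only [br, qbr, map_sub, map_add, map_smul, map_mul, map_zero, dhom_ι, fWm, fWp, fG, fGt, dGen, U_mul, U_mulUU, U_mulUR, U_mulRU, U_sub, U_subUU, U_subUR, U_subRU, U_add, U_addUU, U_addUR, U_addRU, U_smul, U_smulU, U_zero, U_eq, U_eqU] at h ⊢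
      apply unop_injective
      simp only [unop_mul, unop_sub, unop_add, unop_smul, unop_op_U, unop_zero]
      linear_combination (norm := module) h
  | r12 k l =>
      have h := rel (URel.r13 (F := F) (q := q) l k)
      simp only [br, qbr, map_sub, map_add, map_smul, map_mul, map_zero, dhom_ι, fWm, fWp, fG, fGt, dGen, U_mul, U_mulUU, U_mulUR, U_mulRU, U_sub, U_subUU, U_subUR, U_subRU, U_add, U_addUU, U_addUR, U_addRU, U_smul, U_smulU, U_zero, U_eq, U_eqU] at h ⊢
      apply unop_injective
      simp only [unop_mul, unop_sub, unop_add, unop_smul, unop_op_U, unop_zero]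
      linear_combination (norm := module) h
  | r13 k l =>
      have h := rel (URel.r12 (F := F) (q := q) l k)
      simp only [br, qbr, map_sub, map_add, map_smul, map_mul, map_zero, dhom_ι, fWm, fWp, fG, fGt, dGen, U_mul, U_mulUU, U_mulUR, U_mulRU, U_sub, U_subUU, U_subUR, U_subRU, U_add, U_addUU, U_addUR, U_addRU, U_smul, U_smulU, U_zero, U_eq, U_eqU] at h ⊢
      apply unop_injective
      simp only [unop_mul, unop_sub, unop_add, unop_smul, unop_op_U, unop_zero]
      linear_combination (norm := module) h
  | r14 k l =>
      have h := rel (URel.r15 (F := F) (q := q) l k)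
      simp only [br, qbr, map_sub, map_add, map_smul, map_mul, map_zero, dhom_ι, fWm, fWp, fG, fGt, dGen, U_mul, U_mulUU, U_mulUR, U_mulRU, U_sub, U_subUU, U_subUR, U_subRU, U_add, U_addUU, U_addUR, U_addRU, U_smul, U_smulU, U_zero, U_eq, U_eqU] at h ⊢
      apply unop_injective
      simp only [unop_mul, unop_sub, unop_add, unop_smul, unop_op_U, unop_zero]
      linear_combination (norm := module) h
  | r15 k l =>
      have h := rel (URel.r14 (F := F) (q := q) l k)
      simp only [br, qbr, map_sub, map_add, map_smul, map_mul, map_zero, dhom_ι, fWm, fWp, fG, fGt, dGen, U_mul, U_mulUU, U_mulUR, U_mulRU, U_sub, U_subUU, U_subUR, U_subRU, U_add, U_addUU, U_addUR, U_addRU, U_smul, U_smulU, U_zero, U_eq, U_eqU] at h ⊢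
      apply unop_injective
      simp only [unop_mul, unop_sub, unop_add, unop_smul, unop_op_U, unop_zero]
      linear_combination (norm := module) h
  | r16 k l =>
      have h := rel (URel.r16 (F := F) (q := q) l k)
      simp only [br, qbr, map_sub, map_add, map_smul, map_mul, map_zero, dhom_ι, fWm, fWp, fG, fGt, dGen, U_mul, U_mulUU, U_mulUR, U_mulRU, U_sub, U_subUU, U_subUR, U_subRU, U_add, U_addUU, U_addUR, U_addRU, U_smul, U_smulU, U_zero, U_eq, U_eqU] at h ⊢
      apply unop_injective
      simp only [unop_mul, unop_sub, unop_add, unop_smul, unop_op_U, unop_zero]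
      linear_combination (norm := module) h


/-- The automorphism σ as an algebra endomorphism of the quotient. -/
def σA : Ualt F q →ₐ[F] Ualt F q :=
  RingQuot.liftAlgHom F ⟨(RingQuot.mkAlgHom F (URel F q)).comp (σfree F), σrel q⟩

@[simp] lemma σA_mk (x : FreeAlgebra F AGen) :
    σA q (RingQuot.mkAlgHom F (URel F q) x)
      = RingQuot.mkAlgHom F (URel F q) (σfree F x) :=
  RingQuot.liftAlgHom_mkAlgHom_apply _ _ _ _

/-- The antiautomorphism † as an algebra hom into the opposite algebra. -/
def dA : Ualt F q →ₐ[F] (Ualt F q)ᵐᵒᵖ :=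
  RingQuot.liftAlgHom F ⟨dhom F q, drel q⟩

@[simp] lemma dA_mk (x : FreeAlgebra F AGen) :
    dA q (RingQuot.mkAlgHom F (URel F q) x) = dhom F q x :=
  RingQuot.liftAlgHom_mkAlgHom_apply _ _ _ _

lemma σσ : (σA q).comp (σA q) = AlgHom.id F (Ualt F q) := by
  apply RingQuot.ringQuot_ext'
  apply FreeAlgebra.hom_ext
  funext g
  show σA q (σA q (RingQuot.mkAlgHom F (URel F q) (FreeAlgebra.ι F g)))
      = RingQuot.mkAlgHom F (URel F q) (FreeAlgebra.ι F g)
  rw [σA_mk, σfree_ι, σA_mk, σfree_ι]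
  cases g <;> rfl

/-- The inverse of the dagger map. -/
def dInv : (Ualt F q)ᵐᵒᵖ →ₐ[F] Ualt F q := AlgHom.opComm (dA q)

lemma dInv_apply (x : (Ualt F q)ᵐᵒᵖ) : dInv q x = (dA q x.unop).unop := rfl

lemma hdd : (dInv q).comp (dA q) = AlgHom.id F (Ualt F q) := by
  apply RingQuot.ringQuot_ext'
  apply FreeAlgebra.hom_ext
  funext g
  show dInv q (dA q (RingQuot.mkAlgHom F (URel F q) (FreeAlgebra.ι F g)))
      = RingQuot.mkAlgHom F (URel F q) (FreeAlgebra.ι F g)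
  rw [dA_mk, dhom_ι, dInv_apply, unop_op_U, dA_mk, dhom_ι, unop_op_U]
  cases g <;> rfl

lemma hdd' (x : Ualt F q) : (dA q ((dA q x).unop)).unop = x := by
  have h := AlgHom.congr_fun (hdd q) x
  rw [AlgHom.comp_apply, dInv_apply, AlgHom.id_apply] at h
  exact h

lemma hd2 : (dA q).comp (dInv q) = AlgHom.id F ((Ualt F q)ᵐᵒᵖ) := by
  apply AlgHom.ext
  intro x
  rw [AlgHom.comp_apply, dInv_apply, AlgHom.id_apply]
  exact unop_injective (hdd' q x.unop)

/-- σ as an algebra automorphism. -/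
def σE : Ualt F q ≃ₐ[F] Ualt F q := AlgEquiv.ofAlgHom (σA q) (σA q) (σσ q) (σσ q)

/-- † as an algebra isomorphism onto the opposite algebra. -/
def dE : Ualt F q ≃ₐ[F] (Ualt F q)ᵐᵒᵖ :=
  AlgEquiv.ofAlgHom (dA q) (dInv q) (hd2 q) (hdd q)

@[simp] lemma σE_apply (x : Ualt F q) : σE q x = σA q x := rfl

@[simp] lemma dE_apply (x : Ualt F q) : dE q x = dA q x := rfl

lemma hcm : (dA q).comp (σA q) = (AlgHom.op (σA q)).comp (dA q) := by
  apply RingQuot.ringQuot_ext'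
  apply FreeAlgebra.hom_ext
  funext g
  show dA q (σA q (RingQuot.mkAlgHom F (URel F q) (FreeAlgebra.ι F g)))
      = op (σA q ((dA q (RingQuot.mkAlgHom F (URel F q) (FreeAlgebra.ι F g))).unop))
  rw [σA_mk, σfree_ι, dA_mk, dhom_ι, dA_mk, dhom_ι, unop_op_U, σA_mk, σfree_ι]
  cases g <;> rfl

end Stmt5Aux

open Stmt5Aux

/-- the automorphism `σ` and antiautomorphism `†` of `𝒰_q^+`, both
involutions, which commute. -/
theorem stmt5 {F : Type*} [Field F] (q : F) (hq0 : q ≠ 0)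
    (hq : ∀ n : ℕ, 0 < n → q ^ n ≠ 1) :
    ∃ σ : Ualt F q ≃ₐ[F] Ualt F q, ∃ dag : Ualt F q ≃ₐ[F] (Ualt F q)ᵐᵒᵖ,
      (∀ k : ℕ, σ (uWm F q k) = uWp F q k) ∧
      (∀ k : ℕ, σ (uWp F q k) = uWm F q k) ∧
      (∀ k : ℕ, σ (uG F q (k + 1)) = uGt F q (k + 1)) ∧
      (∀ k : ℕ, σ (uGt F q (k + 1)) = uG F q (k + 1)) ∧
      (∀ x : Ualt F q, σ (σ x) = x) ∧
      (∀ k : ℕ, dag (uWm F q k) = MulOpposite.op (uWm F q k)) ∧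
      (∀ k : ℕ, dag (uWp F q k) = MulOpposite.op (uWp F q k)) ∧
      (∀ k : ℕ, dag (uG F q (k + 1)) = MulOpposite.op (uGt F q (k + 1))) ∧
      (∀ k : ℕ, dag (uGt F q (k + 1)) = MulOpposite.op (uG F q (k + 1))) ∧
      (∀ x : Ualt F q, (dag ((dag x).unop)).unop = x) ∧
      (∀ x : Ualt F q, (dag (σ x)).unop = σ ((dag x).unop)) := by
  refine ⟨σE q, dE q, fun k => ?_, fun k => ?_, fun k => ?_, fun k => ?_,
    fun x => ?_, fun k => ?_, fun k => ?_, fun k => ?_, fun k => ?_, fun x => ?_, fun x => ?_⟩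
  · rw [σE_apply, uWm, uWp, fWm, fWp, σA_mk, σfree_ι]; rfl
  · rw [σE_apply, uWm, uWp, fWm, fWp, σA_mk, σfree_ι]; rfl
  · rw [σE_apply, uG, uGt, fG, fGt, σA_mk, σfree_ι]; rfl
  · rw [σE_apply, uG, uGt, fG, fGt, σA_mk, σfree_ι]; rfl
  · rw [σE_apply, σE_apply]
    have h := AlgHom.congr_fun (σσ q) x
    rwa [AlgHom.comp_apply, AlgHom.id_apply] at h
  · rw [dE_apply, uWm, fWm, dA_mk, dhom_ι]; rfl
  · rw [dE_apply, uWp, fWp, dA_mk, dhom_ι]; rfl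
  · rw [dE_apply, uG, uGt, fG, fGt, dA_mk, dhom_ι]; rfl
  · rw [dE_apply, uG, uGt, fG, fGt, dA_mk, dhom_ι]; rfl
  · rw [dE_apply, dE_apply]
    exact hdd' q x
  · rw [dE_apply, dE_apply, σE_apply, σE_apply]
    have h := AlgHom.congr_fun (hcm q) x
    rw [AlgHom.comp_apply, AlgHom.comp_apply] at h
    rw [h]
    rfl
end
end

section
/- In the formal power series ring in two commuting variables s, t over 𝒰_q^+, the following six identities hold: (s−t)·𝒲⁺(s)𝒲⁻(t) = (s−t)·𝒲⁻(t)𝒲⁺(s) + (1−q⁻²)·(𝒢(s)𝒢̃(t) − 𝒢(t)𝒢̃(s)); (s−t)·𝒢̃(s)𝒢(t) = (s−t)·𝒢(t)𝒢̃(s) + (1−q²)·st·(𝒲⁻(t)𝒲⁺(s) − 𝒲⁻(s)𝒲⁺(t)); (s−t)·𝒲⁻(s)𝒢(t) = q⁻¹·((qs−q⁻¹t)·𝒢(t)𝒲⁻(s) − (q−q⁻¹)·t·𝒢(s)𝒲⁻(t)); (s−t)·𝒲⁺(s)𝒢(t) = q·((q⁻¹s−qt)·𝒢(t)𝒲⁺(s)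 + (q−q⁻¹)·t·𝒢(s)𝒲⁺(t)); (s−t)·𝒢̃(s)𝒲⁻(t) = q⁻¹·((q⁻¹s−qt)·𝒲⁻(t)𝒢̃(s) + (q−q⁻¹)·s·𝒲⁻(s)𝒢̃(t)); (s−t)·𝒢̃(s)𝒲⁺(t) = q·((qs−q⁻¹t)·𝒲⁺(t)𝒢̃(s) − (q−q⁻¹)·s·𝒲⁺(s)𝒢̃(t)). -/
noncomputable section

/-- Elements of an `F`-algebra satisfying the defining relations of the alternating
central extension `𝒰_q^+`.  Here `Wm k = 𝒲_{-k}`, `Wp k = 𝒲_{k+1}`, `G k = 𝒢_k`,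
`Gt k = 𝒢̃_k` (with `𝒢₀ = 𝒢̃₀ = 1`). -/
structure AltData (F : Type*) [Field F] (q : F) (A : Type*) [Ring A] [Algebra F A] where
  Wm : ℕ → A
  Wp : ℕ → A
  G : ℕ → A
  Gt : ℕ → A
  hG0 : G 0 = 1
  hGt0 : Gt 0 = 1
  rel1 : ∀ k : ℕ, br (Wm 0) (Wp k) = (1 - (q ^ 2)⁻¹) • (Gt (k + 1) - G (k + 1))
  rel2 : ∀ k : ℕ, br (Wm k) (Wp 0) = (1 - (q ^ 2)⁻¹) • (Gt (k + 1) - G (k + 1))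
  rel3 : ∀ k : ℕ, qbr q (Wm 0) (G (k + 1)) = (q - q⁻¹) • Wm (k + 1)
  rel4 : ∀ k : ℕ, qbr q (Gt (k + 1)) (Wm 0) = (q - q⁻¹) • Wm (k + 1)
  rel5 : ∀ k : ℕ, qbr q (G (k + 1)) (Wp 0) = (q - q⁻¹) • Wp (k + 1)
  rel6 : ∀ k : ℕ, qbr q (Wp 0) (Gt (k + 1)) = (q - q⁻¹) • Wp (k + 1)
  rel7 : ∀ k l : ℕ, br (Wm k) (Wm l) = 0
  rel8 : ∀ k l : ℕ, br (Wp k) (Wp l) = 0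
  rel9 : ∀ k l : ℕ, br (Wm k) (Wp l) + br (Wp k) (Wm l) = 0
  rel10 : ∀ k l : ℕ, br (Wm k) (G (l + 1)) + br (G (k + 1)) (Wm l) = 0
  rel11 : ∀ k l : ℕ, br (Wm k) (Gt (l + 1)) + br (Gt (k + 1)) (Wm l) = 0
  rel12 : ∀ k l : ℕ, br (Wp k) (G (l + 1)) + br (G (k + 1)) (Wp l) = 0
  rel13 : ∀ k l : ℕ, br (Wp k) (Gt (l + 1)) + br (Gt (k + 1)) (Wp l) = 0
  rel14 : ∀ k l : ℕ, br (G (k + 1)) (G (l + 1)) = 0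
  rel15 : ∀ k l : ℕ, br (Gt (k + 1)) (Gt (l + 1)) = 0
  rel16 : ∀ k l : ℕ, br (Gt (k + 1)) (G (l + 1)) + br (G (k + 1)) (Gt (l + 1)) = 0

/-- The scalar `ξ = -q²(q-q⁻¹)⁻²`. -/
def xi {F : Type*} [Field F] (q : F) : F := -(q ^ 2) * ((q - q⁻¹)⁻¹) ^ 2

/-- The central elements `𝒵ⁿ∨` (with `𝒵₀∨ = 1`). -/
def Zv {F : Type*} [Field F] (q : F) {A : Type*} [Ring A] [Algebra F A]
    (D : AltData F q A) (n : ℕ) : A :=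
  (∑ k ∈ Finset.range (n + 1), (q ^ ((n : ℤ) - 2 * (k : ℤ))) • (D.G k * D.Gt (n - k))) -
    q • ∑ k ∈ Finset.range n, (q ^ ((n : ℤ) - 1 - 2 * (k : ℤ))) • (D.Wm k * D.Wp (n - 1 - k))

section Stmt8Aux

open PowerSeries

set_option maxHeartbeats 3200000

variable {A : Type*} [Ring A]

private lemma sVar_comm (f : PowerSeries (PowerSeries A)) : sVar A * f = f * sVar A := by
  ext n : 1
  rw [sVar, coeff_C_mul, coeff_mul_C]
  exact ((commute_X ((coeff n) f)).symm).eq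

private lemma tVar_comm (f : PowerSeries (PowerSeries A)) : tVar A * f = f * tVar A :=
  ((commute_X f).symm).eq

private lemma sVar_cancel {f g : PowerSeries (PowerSeries A)}
    (h : sVar A * f = sVar A * g) : f = g := by
  ext n m
  have h1 := congrArg (coeff n) h
  rw [sVar, coeff_C_mul, coeff_C_mul] at h1
  have h2 := congrArg (coeff (m+1)) h1
  rwa [coeff_succ_X_mul, coeff_succ_X_mul] at h2

variable {F : Type*} [Field F] {q : F} [Algebra F A] (D : AltData F q A)

private lemma hA1 (m : ℕ) :
    q • (D.Wm 0 * D.G m) - q⁻¹ • (D.G m * D.Wm 0) = (q - q⁻¹) • D.Wm m := by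
  cases m with
  | zero => rw [D.hG0]; rw [mul_one, one_mul, sub_smul]
  | succ k => simpa [qbr] using D.rel3 k

private lemma hA2 (m : ℕ) :
    q • (D.Gt m * D.Wm 0) - q⁻¹ • (D.Wm 0 * D.Gt m) = (q - q⁻¹) • D.Wm m := by
  cases m with
  | zero => rw [D.hGt0]; rw [mul_one, one_mul, sub_smul]
  | succ k => simpa [qbr] using D.rel4 k

private lemma hA3 (m : ℕ) :
    q • (D.G m * D.Wp 0) - q⁻¹ • (D.Wp 0 * D.G m) = (q - q⁻¹) • D.Wp m := by
  cases m with
  | zero => rw [D.hG0]; rw [mul_one, one_mul, sub_smul]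
  | succ k => simpa [qbr] using D.rel5 k

private lemma hA4 (m : ℕ) :
    q • (D.Wp 0 * D.Gt m) - q⁻¹ • (D.Gt m * D.Wp 0) = (q - q⁻¹) • D.Wp m := by
  cases m with
  | zero => rw [D.hGt0]; rw [mul_one, one_mul, sub_smul]
  | succ k => simpa [qbr] using D.rel6 k

private lemma hA5 (m : ℕ) :
    D.Wm 0 * D.Wp m - D.Wp m * D.Wm 0 = (1 - (q ^ 2)⁻¹) • (D.Gt (m+1) - D.G (m+1)) := by
  simpa [br] using D.rel1 m

private lemma hA6 (m : ℕ) :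
    D.Wm m * D.Wp 0 - D.Wp 0 * D.Wm m = (1 - (q ^ 2)⁻¹) • (D.Gt (m+1) - D.G (m+1)) := by
  simpa [br] using D.rel2 m

private lemma hA7g (m n : ℕ) : D.G m * D.G n = D.G n * D.G m := by
  cases m with
  | zero => rw [D.hG0, mul_one, one_mul]
  | succ k =>
    cases n with
    | zero => rw [D.hG0, mul_one, one_mul]
    | succ l => have := D.rel14 k l; rw [br, sub_eq_zero] at this; exact this

private lemma hA7h (m n : ℕ) : D.Gt m * D.Gt n = D.Gt n * D.Gt m := by
  cases m with
  | zero => rw [D.hGt0, mul_one, one_mul]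
  | succ k =>
    cases n with
    | zero => rw [D.hGt0, mul_one, one_mul]
    | succ l => have := D.rel15 k l; rw [br, sub_eq_zero] at this; exact this

private lemma hA8 (m n : ℕ) :
    D.Wm m * D.Wp n - D.Wp n * D.Wm m = D.Wm n * D.Wp m - D.Wp m * D.Wm n := by
  have h := D.rel9 m n
  rw [br, br] at h
  rw [← sub_eq_zero, ← h]; abel

private lemma hA9 (m n : ℕ) :
    D.Wm m * D.G (n+1) - D.G (n+1) * D.Wm m = D.Wm n * D.G (m+1) - D.G (m+1) * D.Wm n := by
  have h := D.rel10 m n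
  rw [br, br] at h
  rw [← sub_eq_zero, ← h]; abel

private lemma hA10 (m n : ℕ) :
    D.Wm m * D.Gt (n+1) - D.Gt (n+1) * D.Wm m = D.Wm n * D.Gt (m+1) - D.Gt (m+1) * D.Wm n := by
  have h := D.rel11 m n
  rw [br, br] at h
  rw [← sub_eq_zero, ← h]; abel

private lemma hA11 (m n : ℕ) :
    D.Wp m * D.G (n+1) - D.G (n+1) * D.Wp m = D.Wp n * D.G (m+1) - D.G (m+1) * D.Wp n := by
  have h := D.rel12 m n
  rw [br, br] at h
  rw [← sub_eq_zero, ← h]; abel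

private lemma hA12 (m n : ℕ) :
    D.Wp m * D.Gt (n+1) - D.Gt (n+1) * D.Wp m = D.Wp n * D.Gt (m+1) - D.Gt (m+1) * D.Wp n := by
  have h := D.rel13 m n
  rw [br, br] at h
  rw [← sub_eq_zero, ← h]; abel

private lemma hA13 (m n : ℕ) :
    D.Gt m * D.G n - D.G n * D.Gt m = D.Gt n * D.G m - D.G m * D.Gt n := by
  cases m with
  | zero =>
    cases n with
    | zero => rw [D.hG0, D.hGt0]
    | succ l => rw [D.hGt0, D.hG0, mul_one, one_mul, mul_one, one_mul, sub_self, sub_self]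
  | succ k =>
    cases n with
    | zero => rw [D.hGt0, D.hG0, mul_one, one_mul, mul_one, one_mul, sub_self, sub_self]
    | succ l =>
      have h := D.rel16 k l
      rw [br, br] at h
      rw [← sub_eq_zero, ← h]; abel

private def cc (x : A) : PowerSeries (PowerSeries A) := PowerSeries.C (R := PowerSeries A) (PowerSeries.C (R := A) x)

attribute [local simp] coeff_mk

private lemma hP1s :
    q • (cc (D.Wm 0) * serS D.G) - q⁻¹ • (serS D.G * cc (D.Wm 0))
      = (q - q⁻¹) • serS D.Wm := by
  ext n m
  rcases n with _ | n
  · simpa [serS, cc, coeff_C_mul, coeff_mul_C, coeff_C] using hA1 D m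
  · simp [serS, cc, coeff_C_mul, coeff_mul_C, coeff_C]

private lemma hP2s :
    q • (serS D.Gt * cc (D.Wm 0)) - q⁻¹ • (cc (D.Wm 0) * serS D.Gt)
      = (q - q⁻¹) • serS D.Wm := by
  ext n m
  rcases n with _ | n
  · simpa [serS, cc, coeff_C_mul, coeff_mul_C, coeff_C] using hA2 D m
  · simp [serS, cc, coeff_C_mul, coeff_mul_C, coeff_C]

private lemma hP3s :
    q • (serS D.G * cc (D.Wp 0)) - q⁻¹ • (cc (D.Wp 0) * serS D.G)
      = (q - q⁻¹) • serS D.Wp := by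
  ext n m
  rcases n with _ | n
  · simpa [serS, cc, coeff_C_mul, coeff_mul_C, coeff_C] using hA3 D m
  · simp [serS, cc, coeff_C_mul, coeff_mul_C, coeff_C]

private lemma hP4s :
    q • (cc (D.Wp 0) * serS D.Gt) - q⁻¹ • (serS D.Gt * cc (D.Wp 0))
      = (q - q⁻¹) • serS D.Wp := by
  ext n m
  rcases n with _ | n
  · simpa [serS, cc, coeff_C_mul, coeff_mul_C, coeff_C] using hA4 D m
  · simp [serS, cc, coeff_C_mul, coeff_mul_C, coeff_C]

private lemma hP1t :
    q • (cc (D.Wm 0) * serT D.G) - q⁻¹ • (serT D.G * cc (D.Wm 0))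
      = (q - q⁻¹) • serT D.Wm := by
  ext n m
  rcases m with _ | m
  · simpa [serT, cc, coeff_C_mul, coeff_mul_C, coeff_C] using hA1 D n
  · simp [serT, cc, coeff_C_mul, coeff_mul_C, coeff_C]

private lemma hP2t :
    q • (serT D.Gt * cc (D.Wm 0)) - q⁻¹ • (cc (D.Wm 0) * serT D.Gt)
      = (q - q⁻¹) • serT D.Wm := by
  ext n m
  rcases m with _ | m
  · simpa [serT, cc, coeff_C_mul, coeff_mul_C, coeff_C] using hA2 D n
  · simp [serT, cc, coeff_C_mul, coeff_mul_C, coeff_C]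

private lemma hP3t :
    q • (serT D.G * cc (D.Wp 0)) - q⁻¹ • (cc (D.Wp 0) * serT D.G)
      = (q - q⁻¹) • serT D.Wp := by
  ext n m
  rcases m with _ | m
  · simpa [serT, cc, coeff_C_mul, coeff_mul_C, coeff_C] using hA3 D n
  · simp [serT, cc, coeff_C_mul, coeff_mul_C, coeff_C]

private lemma hP4t :
    q • (cc (D.Wp 0) * serT D.Gt) - q⁻¹ • (serT D.Gt * cc (D.Wp 0))
      = (q - q⁻¹) • serT D.Wp := by
  ext n m
  rcases m with _ | m
  · simpa [serT, cc, coeff_C_mul, coeff_mul_C, coeff_C] using hA4 D n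
  · simp [serT, cc, coeff_C_mul, coeff_mul_C, coeff_C]

private lemma hP5s :
    sVar A * (cc (D.Wm 0) * serS D.Wp - serS D.Wp * cc (D.Wm 0))
      = (1 - (q^2)⁻¹) • (serS D.Gt - serS D.G) := by
  ext n m
  rcases n with _ | n
  · rcases m with _ | m
    · simp [serS, cc, sVar, coeff_C_mul, coeff_mul_C, coeff_C, D.hG0, D.hGt0]
    · simpa [serS, cc, sVar, coeff_C_mul, coeff_mul_C, coeff_C, coeff_succ_X_mul]
        using hA5 D m
  · simp [serS, cc, sVar, coeff_C_mul, coeff_mul_C, coeff_C]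

private lemma hP5t :
    tVar A * (cc (D.Wm 0) * serT D.Wp - serT D.Wp * cc (D.Wm 0))
      = (1 - (q^2)⁻¹) • (serT D.Gt - serT D.G) := by
  ext n m
  rcases n with _ | n
  · simp [serT, cc, tVar, coeff_C_mul, coeff_mul_C, coeff_C, D.hG0, D.hGt0]
  · rcases m with _ | m
    · simpa [serT, cc, tVar, coeff_C_mul, coeff_mul_C, coeff_C, coeff_succ_X_mul]
        using hA5 D n
    · simp [serT, cc, tVar, coeff_C_mul, coeff_mul_C, coeff_C, coeff_succ_X_mul]

private lemma hP7g : serS D.G * serT D.G = serT D.G * serS D.G := by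
  ext n m
  simpa [serS, serT, coeff_C_mul, coeff_mul_C] using hA7g D m n

private lemma hP7h : serS D.Gt * serT D.Gt = serT D.Gt * serS D.Gt := by
  ext n m
  simpa [serS, serT, coeff_C_mul, coeff_mul_C] using hA7h D m n

private lemma hP8 :
    serS D.Wm * serT D.Wp - serT D.Wp * serS D.Wm
      = serT D.Wm * serS D.Wp - serS D.Wp * serT D.Wm := by
  ext n m
  simpa [serS, serT, coeff_C_mul, coeff_mul_C] using hA8 D m n

private lemma hP13 :
    serS D.Gt * serT D.G - serT D.G * serS D.Gt
      = serT D.Gt * serS D.G - serS D.G * serT D.Gt := by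
  ext n m
  simpa [serS, serT, coeff_C_mul, coeff_mul_C] using hA13 D m n

private lemma hP9 :
    sVar A * (serS D.Wm * serT D.G - serT D.G * serS D.Wm)
      = tVar A * (serT D.Wm * serS D.G - serS D.G * serT D.Wm) := by
  ext n m
  rcases n with _ | n
  · rcases m with _ | m
    · simp [serS, serT, sVar, tVar, coeff_C_mul, coeff_mul_C]
    · simp [serS, serT, sVar, tVar, coeff_C_mul, coeff_mul_C, coeff_succ_X_mul, D.hG0]
  · rcases m with _ | m
    · simp [serS, serT, sVar, tVar, coeff_C_mul, coeff_mul_C, coeff_succ_X_mul, D.hG0]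
    · simpa [serS, serT, sVar, tVar, coeff_C_mul, coeff_mul_C, coeff_succ_X_mul]
        using hA9 D m n

private lemma hP10 :
    sVar A * (serS D.Wm * serT D.Gt - serT D.Gt * serS D.Wm)
      = tVar A * (serT D.Wm * serS D.Gt - serS D.Gt * serT D.Wm) := by
  ext n m
  rcases n with _ | n
  · rcases m with _ | m
    · simp [serS, serT, sVar, tVar, coeff_C_mul, coeff_mul_C]
    · simp [serS, serT, sVar, tVar, coeff_C_mul, coeff_mul_C, coeff_succ_X_mul, D.hGt0]
  · rcases m with _ | m
    · simp [serS, serT, sVar, tVar, coeff_C_mul, coeff_mul_C, coeff_succ_X_mul, D.hGt0]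
    · simpa [serS, serT, sVar, tVar, coeff_C_mul, coeff_mul_C, coeff_succ_X_mul]
        using hA10 D m n

private lemma hP11 :
    sVar A * (serS D.Wp * serT D.G - serT D.G * serS D.Wp)
      = tVar A * (serT D.Wp * serS D.G - serS D.G * serT D.Wp) := by
  ext n m
  rcases n with _ | n
  · rcases m with _ | m
    · simp [serS, serT, sVar, tVar, coeff_C_mul, coeff_mul_C]
    · simp [serS, serT, sVar, tVar, coeff_C_mul, coeff_mul_C, coeff_succ_X_mul, D.hG0]
  · rcases m with _ | m
    · simp [serS, serT, sVar, tVar, coeff_C_mul, coeff_mul_C, coeff_succ_X_mul, D.hG0]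
    · simpa [serS, serT, sVar, tVar, coeff_C_mul, coeff_mul_C, coeff_succ_X_mul]
        using hA11 D m n

private lemma hP12 :
    sVar A * (serS D.Wp * serT D.Gt - serT D.Gt * serS D.Wp)
      = tVar A * (serT D.Wp * serS D.Gt - serS D.Gt * serT D.Wp) := by
  ext n m
  rcases n with _ | n
  · rcases m with _ | m
    · simp [serS, serT, sVar, tVar, coeff_C_mul, coeff_mul_C]
    · simp [serS, serT, sVar, tVar, coeff_C_mul, coeff_mul_C, coeff_succ_X_mul, D.hGt0]
  · rcases m with _ | m
    · simp [serS, serT, sVar, tVar, coeff_C_mul, coeff_mul_C, coeff_succ_X_mul, D.hGt0]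
    · simpa [serS, serT, sVar, tVar, coeff_C_mul, coeff_mul_C, coeff_succ_X_mul]
        using hA12 D m n

private theorem gf_main {F : Type*} [Field F] {q : F} (hq0 : q ≠ 0) (hq21 : q^2 - 1 ≠ 0)
    {R : Type*} [Ring R] [Algebra F R]
    (s t w0 w1 a a' b b' g g' h h' : R)
    (hs : ∀ x : R, s * x = x * s) (ht : ∀ x : R, t * x = x * t)
    (hP1s : q • (w0*g) - q⁻¹ • (g*w0) = (q - q⁻¹) • a)
    (hP1t : q • (w0*g') - q⁻¹ • (g'*w0) = (q - q⁻¹) • a')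
    (hP2s : q • (h*w0) - q⁻¹ • (w0*h) = (q - q⁻¹) • a)
    (hP2t : q • (h'*w0) - q⁻¹ • (w0*h') = (q - q⁻¹) • a')
    (hP3s : q • (g*w1) - q⁻¹ • (w1*g) = (q - q⁻¹) • b)
    (hP3t : q • (g'*w1) - q⁻¹ • (w1*g') = (q - q⁻¹) • b')
    (hP4s : q • (w1*h) - q⁻¹ • (h*w1) = (q - q⁻¹) • b)
    (hP4t : q • (w1*h') - q⁻¹ • (h'*w1) = (q - q⁻¹) • b')
    (hP5s : s * (w0*b - b*w0) = (1 - (q^2)⁻¹) • (h - g))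
    (hP5t : t * (w0*b' - b'*w0) = (1 - (q^2)⁻¹) • (h' - g'))
    (hP7gg : g*g' = g'*g)
    (hP7hh : h*h' = h'*h)
    (hP8 : a*b' - b'*a = a'*b - b*a')
    (hP9 : s*(a*g' - g'*a) = t*(a'*g - g*a'))
    (hP10 : s*(a*h' - h'*a) = t*(a'*h - h*a'))
    (hP11 : s*(b*g' - g'*b) = t*(b'*g - g*b'))
    (hP12 : s*(b*h' - h'*b) = t*(b'*h - h*b'))
    (hP13 : h*g' - g'*h = h'*g - g*h')
    :
    ((s - t) * (b*a') = (s - t) * (a'*b) + (1 - (q^2)⁻¹) • (g*h' - g'*h)) ∧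
    (s * ((s - t) * (h*g')) = s * ((s - t) * (g'*h) + (1 - q^2) • (s*(t*(a'*b - a*b'))))) ∧
    ((s - t) * (a*g') = q⁻¹ • ((q • s - q⁻¹ • t) * (g'*a) - (q - q⁻¹) • (t*(g*a')))) ∧
    ((s - t) * (b*g') = q • ((q⁻¹ • s - q • t) * (g'*b) + (q - q⁻¹) • (t*(g*b')))) ∧
    ((s - t) * (h*a') = q⁻¹ • ((q⁻¹ • s - q • t) * (a'*h) + (q - q⁻¹) • (s*(a*h')))) ∧
    ((s - t) * (h*b') = q • ((q • s - q⁻¹ • t) * (b'*h) - (q - q⁻¹) • (s*(b*h')))) := by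
  have Hs1 : ∀ x : R, x * s = s * x := fun x => (hs x).symm
  have Hs2 : ∀ x y : R, x * (s * y) = s * (x * y) := fun x y => by
    rw [← mul_assoc, ← hs x, mul_assoc]
  have T0a : w0 * t = t * w0 := (ht w0).symm
  have T0b : ∀ y : R, w0 * (t * y) = t * (w0 * y) := fun y => by
    rw [← mul_assoc, ← ht w0, mul_assoc]
  have T1a : w1 * t = t * w1 := (ht w1).symm
  have T1b : ∀ y : R, w1 * (t * y) = t * (w1 * y) := fun y => by
    rw [← mul_assoc, ← ht w1, mul_assoc]
  have T2a : a * t = t * a := (ht a).symm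
  have T2b : ∀ y : R, a * (t * y) = t * (a * y) := fun y => by
    rw [← mul_assoc, ← ht a, mul_assoc]
  have T3a : a' * t = t * a' := (ht a').symm
  have T3b : ∀ y : R, a' * (t * y) = t * (a' * y) := fun y => by
    rw [← mul_assoc, ← ht a', mul_assoc]
  have T4a : b * t = t * b := (ht b).symm
  have T4b : ∀ y : R, b * (t * y) = t * (b * y) := fun y => by
    rw [← mul_assoc, ← ht b, mul_assoc]
  have T5a : b' * t = t * b' := (ht b').symm
  have T5b : ∀ y : R, b' * (t * y) = t * (b' * y) := fun y => by
    rw [← mul_assoc, ← ht b', mul_assoc]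
  have T6a : g * t = t * g := (ht g).symm
  have T6b : ∀ y : R, g * (t * y) = t * (g * y) := fun y => by
    rw [← mul_assoc, ← ht g, mul_assoc]
  have T7a : g' * t = t * g' := (ht g').symm
  have T7b : ∀ y : R, g' * (t * y) = t * (g' * y) := fun y => by
    rw [← mul_assoc, ← ht g', mul_assoc]
  have T8a : h * t = t * h := (ht h).symm
  have T8b : ∀ y : R, h * (t * y) = t * (h * y) := fun y => by
    rw [← mul_assoc, ← ht h, mul_assoc]
  have T9a : h' * t = t * h' := (ht h').symm
  have T9b : ∀ y : R, h' * (t * y) = t * (h' * y) := fun y => by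
    rw [← mul_assoc, ← ht h', mul_assoc]
  refine ⟨?c1, ?c2, ?c3, ?c4, ?c5, ?c6⟩
  case c1 =>
    have hc : ((q^2 * (q^2-1) : F)) ≠ 0 := mul_ne_zero (pow_ne_zero _ hq0) hq21
    have key : ((q^2 * (q^2-1) : F)) • (((s - t) * (b*a')) - ((s - t) * (a'*b) + (1 - (q^2)⁻¹) • (g*h' - g'*h))) =
        (((1*q^3)) : F) • (s * (((q • (w0*g') - q⁻¹ • (g'*w0)) - ((q - q⁻¹) • a')) * b)) +
        ((((-1)*q^3)) : F) • ((s * b) * (((q • (w0*g') - q⁻¹ • (g'*w0)) - ((q - q⁻¹) • a')) * (1:R))) +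
        ((((-1)*q^3)) : F) • (t * (((q • (w0*g) - q⁻¹ • (g*w0)) - ((q - q⁻¹) • a)) * b')) +
        (((1*q^3)) : F) • ((t * b') * (((q • (w0*g) - q⁻¹ • (g*w0)) - ((q - q⁻¹) • a)) * (1:R))) +
        ((((-1)*q^4)) : F) • ((1:R) * (((s * (w0*b - b*w0)) - ((1 - (q^2)⁻¹) • (h - g))) * g')) +
        (((1*q^2)) : F) • (g' * (((s * (w0*b - b*w0)) - ((1 - (q^2)⁻¹) • (h - g))) * (1:R))) +
        (((1*q^4)) : F) • ((1:R) * (((t * (w0*b' - b'*w0)) - ((1 - (q^2)⁻¹) • (h' - g'))) * g)) +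
        ((((-1)*q^2)) : F) • (g * (((t * (w0*b' - b'*w0)) - ((1 - (q^2)⁻¹) • (h' - g'))) * (1:R))) +
        (((1*q^4)) : F) • (w0 * (((s*(b*g' - g'*b)) - (t*(b'*g - g*b'))) * (1:R))) +
        ((((-1)*q^2)) : F) • ((1:R) * (((s*(b*g' - g'*b)) - (t*(b'*g - g*b'))) * w0)) +
        ((((-1)*q^4 + 1*q^2)) : F) • (t * (((a*b' - b'*a) - (a'*b - b*a')) * (1:R))) +
        ((((-1)*q^4 + 1*q^2)) : F) • ((1:R) * (((h*g' - g'*h) - (h'*g - g*h')) * (1:R))) +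
        (((1*q^4 + (-1))) : F) • ((1:R) * (((g*g') - (g'*g)) * (1:R))) := by
      simp only [mul_add, add_mul, mul_sub, sub_mul, mul_neg, neg_mul, smul_sub, smul_add,
        smul_smul, mul_smul_comm, smul_mul_assoc, mul_assoc, one_mul, mul_one,
        Hs1, Hs2, T0a, T0b, T1a, T1b, T2a, T2b, T3a, T3b, T4a, T4b, T5a, T5b, T6a, T6b, T7a, T7b, T8a, T8b, T9a, T9b]
      match_scalars <;> (try field_simp [hq0]) <;> ring
    rw [show ((q • (w0*g') - q⁻¹ • (g'*w0)) - ((q - q⁻¹) • a')) = 0 from sub_eq_zero.mpr hP1t] at key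
    rw [show ((q • (w0*g) - q⁻¹ • (g*w0)) - ((q - q⁻¹) • a)) = 0 from sub_eq_zero.mpr hP1s] at key
    rw [show ((s * (w0*b - b*w0)) - ((1 - (q^2)⁻¹) • (h - g))) = 0 from sub_eq_zero.mpr hP5s] at key
    rw [show ((t * (w0*b' - b'*w0)) - ((1 - (q^2)⁻¹) • (h' - g'))) = 0 from sub_eq_zero.mpr hP5t] at key
    rw [show ((s*(b*g' - g'*b)) - (t*(b'*g - g*b'))) = 0 from sub_eq_zero.mpr hP11] at key
    rw [show ((a*b' - b'*a) - (a'*b - b*a')) = 0 from sub_eq_zero.mpr hP8] at key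
    rw [show ((h*g' - g'*h) - (h'*g - g*h')) = 0 from sub_eq_zero.mpr hP13] at key
    rw [show ((g*g') - (g'*g)) = 0 from sub_eq_zero.mpr hP7gg] at key
    simp only [zero_mul, mul_zero, smul_zero, add_zero, zero_add] at key
    have key2 := congrArg (fun z : R => ((q^2 * (q^2-1) : F))⁻¹ • z) key
    simp only [smul_zero, inv_smul_smul₀ hc] at key2
    exact sub_eq_zero.mp key2
  case c2 =>
    have hc : ((q^2 * (q^2-1)^2 : F)) ≠ 0 := mul_ne_zero (pow_ne_zero _ hq0) (pow_ne_zero _ hq21)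
    have key : ((q^2 * (q^2-1)^2 : F)) • ((s * ((s - t) * (h*g'))) - (s * ((s - t) * (g'*h) + (1 - q^2) • (s*(t*(a'*b - a*b')))))) =
        (((1*q^5 + (-1)*q^3)) : F) • ((s * (s * t)) * (((q • (w0*g') - q⁻¹ • (g'*w0)) - ((q - q⁻¹) • a')) * b)) +
        ((((-1)*q^5 + 1*q^3)) : F) • ((s * (s * (t * b))) * (((q • (w0*g') - q⁻¹ • (g'*w0)) - ((q - q⁻¹) • a')) * (1:R))) +
        ((((-1)*q^5 + 1*q^3)) : F) • ((s * (t * t)) * (((q • (w0*g) - q⁻¹ • (g*w0)) - ((q - q⁻¹) • a)) * b')) +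
        (((1*q^5 + (-1)*q^3)) : F) • ((s * (t * (t * b'))) * (((q • (w0*g) - q⁻¹ • (g*w0)) - ((q - q⁻¹) • a)) * (1:R))) +
        ((((-1)*q^6 + 1*q^4)) : F) • ((s * t) * (((s * (w0*b - b*w0)) - ((1 - (q^2)⁻¹) • (h - g))) * g')) +
        (((1*q^4 + (-1)*q^2)) : F) • ((s * (t * g')) * (((s * (w0*b - b*w0)) - ((1 - (q^2)⁻¹) • (h - g))) * (1:R))) +
        (((1*q^6 + (-2)*q^4 + 1*q^2)) : F) • ((s * t) * (((s * (w0*b - b*w0)) - ((1 - (q^2)⁻¹) • (h - g))) * h')) +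
        (((1*q^6 + (-1)*q^4)) : F) • ((s * t) * (((t * (w0*b' - b'*w0)) - ((1 - (q^2)⁻¹) • (h' - g'))) * g)) +
        ((((-1)*q^4 + 1*q^2)) : F) • ((s * (t * g)) * (((t * (w0*b' - b'*w0)) - ((1 - (q^2)⁻¹) • (h' - g'))) * (1:R))) +
        (((1*q^4 + (-1)*q^2)) : F) • ((s * t) * (((t * (w0*b' - b'*w0)) - ((1 - (q^2)⁻¹) • (h' - g'))) * h)) +
        ((((-1)*q^6 + 1*q^4)) : F) • ((s * (t * h)) * (((t * (w0*b' - b'*w0)) - ((1 - (q^2)⁻¹) • (h' - g'))) * (1:R))) +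
        (((1*q^6 + (-1)*q^4)) : F) • ((s * (s * h)) * (((t * (w0*b' - b'*w0)) - ((1 - (q^2)⁻¹) • (h' - g'))) * (1:R))) +
        ((((-1)*q^6 + 1*q^4)) : F) • ((s * s) * (((t * (w0*b' - b'*w0)) - ((1 - (q^2)⁻¹) • (h' - g'))) * h)) +
        (((1*q^6 + (-1)*q^4)) : F) • ((s * (t * w0)) * (((s*(b*g' - g'*b)) - (t*(b'*g - g*b'))) * (1:R))) +
        ((((-1)*q^4 + 1*q^2)) : F) • ((s * t) * (((s*(b*g' - g'*b)) - (t*(b'*g - g*b'))) * w0)) +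
        ((((-1)*q^8 + 2*q^6 + (-1)*q^4)) : F) • ((s * (s * t)) * (((a*b' - b'*a) - (a'*b - b*a')) * (1:R))) +
        ((((-1)*q^6 + 2*q^4 + (-1)*q^2)) : F) • ((s * t) * (((h*g' - g'*h) - (h'*g - g*h')) * (1:R))) +
        (((1*q^6 + (-1)*q^4 + (-1)*q^2 + 1)) : F) • ((s * t) * (((g*g') - (g'*g)) * (1:R))) +
        ((((-1)*q^4 + 2*q^2 + (-1))) : F) • ((s * t) * (((h*h') - (h'*h)) * (1:R))) +
        (((1*q^2)) : F) • ((s * (s * (t * w0))) * (((h*h') - (h'*h)) * w1)) +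
        ((((-1)*q^6)) : F) • ((s * (s * (t * (w0 * w1)))) * (((h*h') - (h'*h)) * (1:R))) +
        ((((-1)*q^4)) : F) • ((s * (s * t)) * (((h*h') - (h'*h)) * (w1 * w0))) +
        (((1*q^8)) : F) • ((s * (s * (t * w1))) * (((h*h') - (h'*h)) * w0)) +
        (((1*q^6 + (-2)*q^4 + 1*q^2)) : F) • ((s * s) * (((h*h') - (h'*h)) * (1:R))) +
        (((1*q^5 + (-1)*q^3)) : F) • ((s * (t * t)) * (((q • (h*w0) - q⁻¹ • (w0*h)) - ((q - q⁻¹) • a)) * b')) +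
        ((((-1)*q^5 + 1*q^3)) : F) • ((s * (t * (t * b'))) * (((q • (h*w0) - q⁻¹ • (w0*h)) - ((q - q⁻¹) • a)) * (1:R))) +
        ((((-1)*q^5 + 1*q^3)) : F) • ((s * (s * t)) * (((q • (h*w0) - q⁻¹ • (w0*h)) - ((q - q⁻¹) • a)) * b')) +
        (((1*q^7 + (-1)*q^5)) : F) • ((s * (s * (t * b'))) * (((q • (h*w0) - q⁻¹ • (w0*h)) - ((q - q⁻¹) • a)) * (1:R))) +
        (((1*q^4 + (-1)*q^2)) : F) • ((s * (t * w0)) * (((s*(b*h' - h'*b)) - (t*(b'*h - h*b'))) * (1:R))) +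
        ((((-1)*q^6 + 1*q^4)) : F) • ((s * t) * (((s*(b*h' - h'*b)) - (t*(b'*h - h*b'))) * w0)) +
        ((((-1)*q^5)) : F) • ((s * (s * (t * w0))) * (((q • (w1*h') - q⁻¹ • (h'*w1)) - ((q - q⁻¹) • b')) * h)) +
        (((1*q^3)) : F) • ((s * (s * (t * (w0 * h)))) * (((q • (w1*h') - q⁻¹ • (h'*w1)) - ((q - q⁻¹) • b')) * (1:R))) +
        (((1*q^7)) : F) • ((s * (s * t)) * (((q • (w1*h') - q⁻¹ • (h'*w1)) - ((q - q⁻¹) • b')) * (h * w0))) +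
        ((((-1)*q^5)) : F) • ((s * (s * (t * h))) * (((q • (w1*h') - q⁻¹ • (h'*w1)) - ((q - q⁻¹) • b')) * w0)) +
        (((1*q^5)) : F) • ((s * (s * (t * w0))) * (((q • (w1*h) - q⁻¹ • (h*w1)) - ((q - q⁻¹) • b)) * h')) +
        ((((-1)*q^3)) : F) • ((s * (s * (t * (w0 * h')))) * (((q • (w1*h) - q⁻¹ • (h*w1)) - ((q - q⁻¹) • b)) * (1:R))) +
        ((((-1)*q^7)) : F) • ((s * (s * t)) * (((q • (w1*h) - q⁻¹ • (h*w1)) - ((q - q⁻¹) • b)) * (h' * w0))) +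
        (((1*q^5)) : F) • ((s * (s * (t * h'))) * (((q • (w1*h) - q⁻¹ • (h*w1)) - ((q - q⁻¹) • b)) * w0)) +
        ((((-1)*q^7 + 2*q^5 + (-1)*q^3)) : F) • ((s * (s * (t * b))) * (((q • (h'*w0) - q⁻¹ • (w0*h')) - ((q - q⁻¹) • a')) * (1:R))) := by
      simp only [mul_add, add_mul, mul_sub, sub_mul, mul_neg, neg_mul, smul_sub, smul_add,
        smul_smul, mul_smul_comm, smul_mul_assoc, mul_assoc, one_mul, mul_one,
        Hs1, Hs2, T0a, T0b, T1a, T1b, T2a, T2b, T3a, T3b, T4a, T4b, T5a, T5b, T6a, T6b, T7a, T7b, T8a, T8b, T9a, T9b]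
      match_scalars <;> (try field_simp [hq0]) <;> ring
    rw [show ((q • (w0*g') - q⁻¹ • (g'*w0)) - ((q - q⁻¹) • a')) = 0 from sub_eq_zero.mpr hP1t] at key
    rw [show ((q • (w0*g) - q⁻¹ • (g*w0)) - ((q - q⁻¹) • a)) = 0 from sub_eq_zero.mpr hP1s] at key
    rw [show ((s * (w0*b - b*w0)) - ((1 - (q^2)⁻¹) • (h - g))) = 0 from sub_eq_zero.mpr hP5s] at key
    rw [show ((t * (w0*b' - b'*w0)) - ((1 - (q^2)⁻¹) • (h' - g'))) = 0 from sub_eq_zero.mpr hP5t] at key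
    rw [show ((s*(b*g' - g'*b)) - (t*(b'*g - g*b'))) = 0 from sub_eq_zero.mpr hP11] at key
    rw [show ((a*b' - b'*a) - (a'*b - b*a')) = 0 from sub_eq_zero.mpr hP8] at key
    rw [show ((h*g' - g'*h) - (h'*g - g*h')) = 0 from sub_eq_zero.mpr hP13] at key
    rw [show ((g*g') - (g'*g)) = 0 from sub_eq_zero.mpr hP7gg] at key
    rw [show ((h*h') - (h'*h)) = 0 from sub_eq_zero.mpr hP7hh] at key
    rw [show ((q • (h*w0) - q⁻¹ • (w0*h)) - ((q - q⁻¹) • a)) = 0 from sub_eq_zero.mpr hP2s] at key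
    rw [show ((s*(b*h' - h'*b)) - (t*(b'*h - h*b'))) = 0 from sub_eq_zero.mpr hP12] at key
    rw [show ((q • (w1*h') - q⁻¹ • (h'*w1)) - ((q - q⁻¹) • b')) = 0 from sub_eq_zero.mpr hP4t] at key
    rw [show ((q • (w1*h) - q⁻¹ • (h*w1)) - ((q - q⁻¹) • b)) = 0 from sub_eq_zero.mpr hP4s] at key
    rw [show ((q • (h'*w0) - q⁻¹ • (w0*h')) - ((q - q⁻¹) • a')) = 0 from sub_eq_zero.mpr hP2t] at key
    simp only [zero_mul, mul_zero, smul_zero, add_zero, zero_add] at key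
    have key2 := congrArg (fun z : R => ((q^2 * (q^2-1)^2 : F))⁻¹ • z) key
    simp only [smul_zero, inv_smul_smul₀ hc] at key2
    exact sub_eq_zero.mp key2
  case c3 =>
    have hc : ((q^2 * (q^2-1) : F)) ≠ 0 := mul_ne_zero (pow_ne_zero _ hq0) hq21
    have key : ((q^2 * (q^2-1) : F)) • (((s - t) * (a*g')) - (q⁻¹ • ((q • s - q⁻¹ • t) * (g'*a) - (q - q⁻¹) • (t*(g*a'))))) =
        (((1*q^4 + (-1)*q^2)) : F) • ((1:R) * (((s*(a*g' - g'*a)) - (t*(a'*g - g*a'))) * (1:R))) +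
        ((((-1)*q^3)) : F) • (t * (((q • (w0*g') - q⁻¹ • (g'*w0)) - ((q - q⁻¹) • a')) * g)) +
        (((1*q)) : F) • ((t * g) * (((q • (w0*g') - q⁻¹ • (g'*w0)) - ((q - q⁻¹) • a')) * (1:R))) +
        (((1*q^3)) : F) • (t * (((q • (w0*g) - q⁻¹ • (g*w0)) - ((q - q⁻¹) • a)) * g')) +
        ((((-1)*q)) : F) • ((t * g') * (((q • (w0*g) - q⁻¹ • (g*w0)) - ((q - q⁻¹) • a)) * (1:R))) +
        ((((-1)*q^4)) : F) • ((t * w0) * (((g*g') - (g'*g)) * (1:R))) +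
        (((1)) : F) • (t * (((g*g') - (g'*g)) * w0)) := by
      simp only [mul_add, add_mul, mul_sub, sub_mul, mul_neg, neg_mul, smul_sub, smul_add,
        smul_smul, mul_smul_comm, smul_mul_assoc, mul_assoc, one_mul, mul_one,
        Hs1, Hs2, T0a, T0b, T1a, T1b, T2a, T2b, T3a, T3b, T4a, T4b, T5a, T5b, T6a, T6b, T7a, T7b, T8a, T8b, T9a, T9b]
      match_scalars <;> (try field_simp [hq0]) <;> ring
    rw [show ((s*(a*g' - g'*a)) - (t*(a'*g - g*a'))) = 0 from sub_eq_zero.mpr hP9] at key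
    rw [show ((q • (w0*g') - q⁻¹ • (g'*w0)) - ((q - q⁻¹) • a')) = 0 from sub_eq_zero.mpr hP1t] at key
    rw [show ((q • (w0*g) - q⁻¹ • (g*w0)) - ((q - q⁻¹) • a)) = 0 from sub_eq_zero.mpr hP1s] at key
    rw [show ((g*g') - (g'*g)) = 0 from sub_eq_zero.mpr hP7gg] at key
    simp only [zero_mul, mul_zero, smul_zero, add_zero, zero_add] at key
    have key2 := congrArg (fun z : R => ((q^2 * (q^2-1) : F))⁻¹ • z) key
    simp only [smul_zero, inv_smul_smul₀ hc] at key2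
    exact sub_eq_zero.mp key2
  case c4 =>
    have hc : (((q^2-1) : F)) ≠ 0 := hq21
    have key : (((q^2-1) : F)) • (((s - t) * (b*g')) - (q • ((q⁻¹ • s - q • t) * (g'*b) + (q - q⁻¹) • (t*(g*b'))))) =
        (((1*q^2 + (-1))) : F) • ((1:R) * (((s*(b*g' - g'*b)) - (t*(b'*g - g*b'))) * (1:R))) +
        ((((-1)*q)) : F) • (t * (((q • (g'*w1) - q⁻¹ • (w1*g')) - ((q - q⁻¹) • b')) * g)) +
        (((1*q^3)) : F) • ((t * g) * (((q • (g'*w1) - q⁻¹ • (w1*g')) - ((q - q⁻¹) • b')) * (1:R))) +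
        ((((-1)*q^3)) : F) • ((t * g') * (((q • (g*w1) - q⁻¹ • (w1*g)) - ((q - q⁻¹) • b)) * (1:R))) +
        (((1*q)) : F) • (t * (((q • (g*w1) - q⁻¹ • (w1*g)) - ((q - q⁻¹) • b)) * g')) +
        ((((-1)*q^4)) : F) • (t * (((g*g') - (g'*g)) * w1)) +
        (((1)) : F) • ((t * w1) * (((g*g') - (g'*g)) * (1:R))) := by
      simp only [mul_add, add_mul, mul_sub, sub_mul, mul_neg, neg_mul, smul_sub, smul_add,
        smul_smul, mul_smul_comm, smul_mul_assoc, mul_assoc, one_mul, mul_one,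
        Hs1, Hs2, T0a, T0b, T1a, T1b, T2a, T2b, T3a, T3b, T4a, T4b, T5a, T5b, T6a, T6b, T7a, T7b, T8a, T8b, T9a, T9b]
      match_scalars <;> (try field_simp [hq0]) <;> ring
    rw [show ((s*(b*g' - g'*b)) - (t*(b'*g - g*b'))) = 0 from sub_eq_zero.mpr hP11] at key
    rw [show ((q • (g'*w1) - q⁻¹ • (w1*g')) - ((q - q⁻¹) • b')) = 0 from sub_eq_zero.mpr hP3t] at key
    rw [show ((q • (g*w1) - q⁻¹ • (w1*g)) - ((q - q⁻¹) • b)) = 0 from sub_eq_zero.mpr hP3s] at key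
    rw [show ((g*g') - (g'*g)) = 0 from sub_eq_zero.mpr hP7gg] at key
    simp only [zero_mul, mul_zero, smul_zero, add_zero, zero_add] at key
    have key2 := congrArg (fun z : R => (((q^2-1) : F))⁻¹ • z) key
    simp only [smul_zero, inv_smul_smul₀ hc] at key2
    exact sub_eq_zero.mp key2
  case c5 =>
    have hc : ((q^2 * (q^2-1) : F)) ≠ 0 := mul_ne_zero (pow_ne_zero _ hq0) hq21
    have key : ((q^2 * (q^2-1) : F)) • (((s - t) * (h*a')) - (q⁻¹ • ((q⁻¹ • s - q • t) * (a'*h) + (q - q⁻¹) • (s*(a*h'))))) =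
        ((((-1)*q^4 + 1*q^2)) : F) • ((1:R) * (((s*(a*h' - h'*a)) - (t*(a'*h - h*a'))) * (1:R))) +
        (((1*q^4)) : F) • (s * (((h*h') - (h'*h)) * w0)) +
        ((((-1))) : F) • ((s * w0) * (((h*h') - (h'*h)) * (1:R))) +
        ((((-1)*q^3)) : F) • ((s * h) * (((q • (h'*w0) - q⁻¹ • (w0*h')) - ((q - q⁻¹) • a')) * (1:R))) +
        (((1*q)) : F) • (s * (((q • (h'*w0) - q⁻¹ • (w0*h')) - ((q - q⁻¹) • a')) * h)) +
        (((1*q^3)) : F) • ((s * h') * (((q • (h*w0) - q⁻¹ • (w0*h)) - ((q - q⁻¹) • a)) * (1:R))) +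
        ((((-1)*q)) : F) • (s * (((q • (h*w0) - q⁻¹ • (w0*h)) - ((q - q⁻¹) • a)) * h')) := by
      simp only [mul_add, add_mul, mul_sub, sub_mul, mul_neg, neg_mul, smul_sub, smul_add,
        smul_smul, mul_smul_comm, smul_mul_assoc, mul_assoc, one_mul, mul_one,
        Hs1, Hs2, T0a, T0b, T1a, T1b, T2a, T2b, T3a, T3b, T4a, T4b, T5a, T5b, T6a, T6b, T7a, T7b, T8a, T8b, T9a, T9b]
      match_scalars <;> (try field_simp [hq0]) <;> ring
    rw [show ((s*(a*h' - h'*a)) - (t*(a'*h - h*a'))) = 0 from sub_eq_zero.mpr hP10] at key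
    rw [show ((h*h') - (h'*h)) = 0 from sub_eq_zero.mpr hP7hh] at key
    rw [show ((q • (h'*w0) - q⁻¹ • (w0*h')) - ((q - q⁻¹) • a')) = 0 from sub_eq_zero.mpr hP2t] at key
    rw [show ((q • (h*w0) - q⁻¹ • (w0*h)) - ((q - q⁻¹) • a)) = 0 from sub_eq_zero.mpr hP2s] at key
    simp only [zero_mul, mul_zero, smul_zero, add_zero, zero_add] at key
    have key2 := congrArg (fun z : R => ((q^2 * (q^2-1) : F))⁻¹ • z) key
    simp only [smul_zero, inv_smul_smul₀ hc] at key2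
    exact sub_eq_zero.mp key2
  case c6 =>
    have hc : (((q^2-1) : F)) ≠ 0 := hq21
    have key : (((q^2-1) : F)) • (((s - t) * (h*b')) - (q • ((q • s - q⁻¹ • t) * (b'*h) - (q - q⁻¹) • (s*(b*h'))))) =
        ((((-1)*q^2 + 1)) : F) • ((1:R) * (((s*(b*h' - h'*b)) - (t*(b'*h - h*b'))) * (1:R))) +
        ((((-1))) : F) • (s * (((h*h') - (h'*h)) * w1)) +
        (((1*q^4)) : F) • ((s * w1) * (((h*h') - (h'*h)) * (1:R))) +
        (((1*q^3)) : F) • (s * (((q • (w1*h') - q⁻¹ • (h'*w1)) - ((q - q⁻¹) • b')) * h)) +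
        ((((-1)*q)) : F) • ((s * h) * (((q • (w1*h') - q⁻¹ • (h'*w1)) - ((q - q⁻¹) • b')) * (1:R))) +
        ((((-1)*q^3)) : F) • (s * (((q • (w1*h) - q⁻¹ • (h*w1)) - ((q - q⁻¹) • b)) * h')) +
        (((1*q)) : F) • ((s * h') * (((q • (w1*h) - q⁻¹ • (h*w1)) - ((q - q⁻¹) • b)) * (1:R))) := by
      simp only [mul_add, add_mul, mul_sub, sub_mul, mul_neg, neg_mul, smul_sub, smul_add,
        smul_smul, mul_smul_comm, smul_mul_assoc, mul_assoc, one_mul, mul_one,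
        Hs1, Hs2, T0a, T0b, T1a, T1b, T2a, T2b, T3a, T3b, T4a, T4b, T5a, T5b, T6a, T6b, T7a, T7b, T8a, T8b, T9a, T9b]
      match_scalars <;> (try field_simp [hq0]) <;> ring
    rw [show ((s*(b*h' - h'*b)) - (t*(b'*h - h*b'))) = 0 from sub_eq_zero.mpr hP12] at key
    rw [show ((h*h') - (h'*h)) = 0 from sub_eq_zero.mpr hP7hh] at key
    rw [show ((q • (w1*h') - q⁻¹ • (h'*w1)) - ((q - q⁻¹) • b')) = 0 from sub_eq_zero.mpr hP4t] at key
    rw [show ((q • (w1*h) - q⁻¹ • (h*w1)) - ((q - q⁻¹) • b)) = 0 from sub_eq_zero.mpr hP4s] at key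
    simp only [zero_mul, mul_zero, smul_zero, add_zero, zero_add] at key
    have key2 := congrArg (fun z : R => (((q^2-1) : F))⁻¹ • z) key
    simp only [smul_zero, inv_smul_smul₀ hc] at key2
    exact sub_eq_zero.mp key2

end Stmt8Aux

set_option maxHeartbeats 3200000 in
/-- six generating-function identities in the power series ring in two
commuting variables `s, t` over `𝒰_q^+`. -/
theorem stmt8 {F : Type*} [Field F] (q : F) (hq0 : q ≠ 0)
    (hq : ∀ n : ℕ, 0 < n → q ^ n ≠ 1)
    {A : Type*} [Ring A] [Algebra F A] (D : AltData F q A) :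
    (sVar A - tVar A) * (serS D.Wp * serT D.Wm) =
        (sVar A - tVar A) * (serT D.Wm * serS D.Wp) +
          (1 - (q ^ 2)⁻¹) • (serS D.G * serT D.Gt - serT D.G * serS D.Gt) ∧
    (sVar A - tVar A) * (serS D.Gt * serT D.G) =
        (sVar A - tVar A) * (serT D.G * serS D.Gt) +
          (1 - q ^ 2) • (sVar A * tVar A * (serT D.Wm * serS D.Wp - serS D.Wm * serT D.Wp)) ∧
    (sVar A - tVar A) * (serS D.Wm * serT D.G) =
        q⁻¹ • ((q • sVar A - q⁻¹ • tVar A) * (serT D.G * serS D.Wm) -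
          (q - q⁻¹) • (tVar A * (serS D.G * serT D.Wm))) ∧
    (sVar A - tVar A) * (serS D.Wp * serT D.G) =
        q • ((q⁻¹ • sVar A - q • tVar A) * (serT D.G * serS D.Wp) +
          (q - q⁻¹) • (tVar A * (serS D.G * serT D.Wp))) ∧
    (sVar A - tVar A) * (serS D.Gt * serT D.Wm) =
        q⁻¹ • ((q⁻¹ • sVar A - q • tVar A) * (serT D.Wm * serS D.Gt) +
          (q - q⁻¹) • (sVar A * (serS D.Wm * serT D.Gt))) ∧
    (sVar A - tVar A) * (serS D.Gt * serT D.Wp) =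
        q • ((q • sVar A - q⁻¹ • tVar A) * (serT D.Wp * serS D.Gt) -
          (q - q⁻¹) • (sVar A * (serS D.Wp * serT D.Gt))) := by
  have hq21 : q ^ 2 - 1 ≠ 0 := sub_ne_zero.mpr (hq 2 (by norm_num))
  obtain ⟨c1, c2, c3, c4, c5, c6⟩ :=
    gf_main (q := q) hq0 hq21 (sVar A) (tVar A) (cc (D.Wm 0)) (cc (D.Wp 0))
      (serS D.Wm) (serT D.Wm) (serS D.Wp) (serT D.Wp)
      (serS D.G) (serT D.G) (serS D.Gt) (serT D.Gt)
      sVar_comm tVar_comm (hP1s D) (hP1t D) (hP2s D) (hP2t D) (hP3s D) (hP3t D)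
      (hP4s D) (hP4t D) (hP5s D) (hP5t D) (hP7g D) (hP7h D) (hP8 D) (hP9 D)
      (hP10 D) (hP11 D) (hP12 D) (hP13 D)
  refine ⟨c1, ?_, c3, c4, c5, c6⟩
  have h2 := sVar_cancel c2
  rw [mul_assoc]
  exact h2

end
end

section
/- In the formal power series ring in t over 𝒰_q^+, the following identity holds: −(q−q⁻¹)·E(t) = (𝒢̃(q⁻¹ξ⁻¹t))⁻¹·𝒵^∨(ξ⁻¹t)·(𝒢̃(qξ⁻¹t))⁻¹, where ξ = −q²(q−q⁻¹)⁻². -/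
noncomputable section

set_option maxHeartbeats 1000000

section Stmt15Aux

open PowerSeries Finset

variable {F : Type*} [Field F] {q : F} {A : Type*} [Ring A] [Algebra F A]



lemma st_hc (hq0 : q ≠ 0) (hq : ∀ n : ℕ, 0 < n → q ^ n ≠ 1) : q - q⁻¹ ≠ 0 := by
  intro h
  apply hq 2 two_pos
  have : q = q⁻¹ := sub_eq_zero.mp h
  calc q ^ 2 = q * q := sq q
  _ = q * q⁻¹ := by rw [← this]
  _ = 1 := mul_inv_cancel₀ hq0

lemma st_hs (hq0 : q ≠ 0) (hq : ∀ n : ℕ, 0 < n → q ^ n ≠ 1) : q + q⁻¹ ≠ 0 := by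
  intro h
  apply hq 4 (by norm_num)
  have h2 : q ^ 2 = -1 := by
    have : q = -q⁻¹ := eq_neg_of_add_eq_zero_left h
    calc q ^ 2 = q * q := sq q
    _ = q * -q⁻¹ := by rw [← this]
    _ = -1 := by rw [mul_neg, mul_inv_cancel₀ hq0]
  calc q ^ 4 = (q ^ 2) ^ 2 := by ring
  _ = 1 := by rw [h2]; ring

lemma st_hxi (hq0 : q ≠ 0) (hq : ∀ n : ℕ, 0 < n → q ^ n ≠ 1) : xi q ≠ 0 := by
  have hc := st_hc hq0 hq
  simp only [xi]
  exact mul_ne_zero (neg_ne_zero.mpr (pow_ne_zero 2 hq0))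
    (pow_ne_zero 2 (inv_ne_zero hc))

/-- A power series with constant coefficient `1` over a (possibly noncommutative)
ring is a unit. -/
lemma st_exists_unit (f : PowerSeries A) (hf : PowerSeries.constantCoeff (R := A) f = 1) :
    ∃ u : (PowerSeries A)ˣ, (u : PowerSeries A) = f := by
  set h : PowerSeries A := 1 - f with hh
  have h0 : PowerSeries.constantCoeff (R := A) h = 0 := by simp [hh, hf]
  have hpow : ∀ k j : ℕ, j < k → PowerSeries.coeff (R := A) j (h ^ k) = 0 := by
    intro k
    induction k with
    | zero => intro j hj; omega
    | succ k ih =>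
      intro j hj
      rw [pow_succ']
      rw [PowerSeries.coeff_mul]
      apply Finset.sum_eq_zero
      intro p hp
      rw [Finset.HasAntidiagonal.mem_antidiagonal] at hp
      rcases Nat.eq_zero_or_pos p.1 with h1 | h1
      · have : PowerSeries.coeff (R := A) p.1 h = 0 := by
          rw [h1, PowerSeries.coeff_zero_eq_constantCoeff_apply]
          exact h0
        rw [this, zero_mul]
      · have : p.2 < k := by omega
        rw [ih p.2 this, mul_zero]
  have hgeom : ∀ n : ℕ, (1 - h) * (∑ k ∈ Finset.range (n + 1), h ^ k) = 1 - h ^ (n + 1) ∧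
      (∑ k ∈ Finset.range (n + 1), h ^ k) * (1 - h) = 1 - h ^ (n + 1) := by
    intro n
    induction n with
    | zero => simp
    | succ n ih =>
      obtain ⟨ih1, ih2⟩ := ih
      constructor
      · rw [Finset.sum_range_succ, mul_add, ih1, sub_mul, one_mul, ← pow_succ']
        abel
      · rw [Finset.sum_range_succ, add_mul, ih2, mul_sub, mul_one, ← pow_succ]
        abel
  set g : PowerSeries A := PowerSeries.mk
    (fun n => ∑ k ∈ Finset.range (n + 1), PowerSeries.coeff (R := A) n (h ^ k)) with hg
  have hgc : ∀ n j : ℕ, j ≤ n →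
      PowerSeries.coeff (R := A) j g = PowerSeries.coeff (R := A) j (∑ k ∈ Finset.range (n + 1), h ^ k) := by
    intro n j hjn
    rw [hg, PowerSeries.coeff_mk, map_sum]
    apply Finset.sum_subset
    · intro a ha
      rw [Finset.mem_range] at *
      omega
    · intro a _ ha
      rw [Finset.mem_range] at ha
      exact hpow a j (by omega)
  have hfg : f * g = 1 := by
    ext n
    have h1 : PowerSeries.coeff (R := A) n (f * g) =
        PowerSeries.coeff (R := A) n (f * (∑ k ∈ Finset.range (n + 1), h ^ k)) := by
      rw [PowerSeries.coeff_mul, PowerSeries.coeff_mul]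
      apply Finset.sum_congr rfl
      intro p hp
      rw [Finset.HasAntidiagonal.mem_antidiagonal] at hp
      rw [hgc n p.2 (by omega)]
    have h2 : f * (∑ k ∈ Finset.range (n + 1), h ^ k) = 1 - h ^ (n + 1) := by
      have := (hgeom n).1
      rw [hh] at this
      simpa using this
    rw [h1, h2, map_sub, hpow (n + 1) n (by omega), sub_zero]
  have hgf : g * f = 1 := by
    ext n
    have h1 : PowerSeries.coeff (R := A) n (g * f) =
        PowerSeries.coeff (R := A) n ((∑ k ∈ Finset.range (n + 1), h ^ k) * f) := by
      rw [PowerSeries.coeff_mul, PowerSeries.coeff_mul]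
      apply Finset.sum_congr rfl
      intro p hp
      rw [Finset.HasAntidiagonal.mem_antidiagonal] at hp
      rw [hgc n p.1 (by omega)]
    have h2 : (∑ k ∈ Finset.range (n + 1), h ^ k) * f = 1 - h ^ (n + 1) := by
      have := (hgeom n).2
      rw [hh] at this
      simpa using this
    rw [h1, h2, map_sub, hpow (n + 1) n (by omega), sub_zero]
  exact ⟨⟨f, g, hfg, hgf⟩, rfl⟩


lemma st_yGt (hq0 : q ≠ 0) (D : AltData F q A) (k : ℕ) :
    D.Wp 0 * D.Gt k = (q⁻¹ * q⁻¹) • (D.Gt k * D.Wp 0) + (q⁻¹ * (q - q⁻¹)) • D.Wp k := by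
  cases k with
  | zero =>
    rw [D.hGt0, mul_one, one_mul]
    match_scalars <;> field_simp <;> ring
  | succ k =>
    have h := D.rel6 k
    unfold qbr at h
    linear_combination (norm := match_scalars <;> (field_simp; try ring; try (field_simp; ring))) q⁻¹ • h

lemma st_xGt (hq0 : q ≠ 0) (D : AltData F q A) (k : ℕ) :
    D.Wm 0 * D.Gt k = (q * q) • (D.Gt k * D.Wm 0) - (q * (q - q⁻¹)) • D.Wm k := by
  cases k with
  | zero =>
    rw [D.hGt0, mul_one, one_mul]
    match_scalars <;> field_simp <;> ring
  | succ k =>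
    have h := D.rel4 k
    unfold qbr at h
    linear_combination (norm := match_scalars <;> (field_simp; try ring; try (field_simp; ring))) (-q) • h

lemma st_yG (hq0 : q ≠ 0) (D : AltData F q A) (k : ℕ) :
    D.Wp 0 * D.G k = (q * q) • (D.G k * D.Wp 0) - (q * (q - q⁻¹)) • D.Wp k := by
  cases k with
  | zero =>
    rw [D.hG0, mul_one, one_mul]
    match_scalars <;> field_simp <;> ring
  | succ k =>
    have h := D.rel5 k
    unfold qbr at h
    linear_combination (norm := match_scalars <;> (field_simp; try ring; try (field_simp; ring))) (-q) • h

lemma st_xWp (hq0 : q ≠ 0) (D : AltData F q A) (k : ℕ) :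
    D.Wm 0 * D.Wp k - D.Wp k * D.Wm 0 = (q⁻¹ * (q - q⁻¹)) • (D.Gt (k + 1) - D.G (k + 1)) := by
  have h := D.rel1 k
  unfold br at h
  linear_combination (norm := match_scalars <;> (field_simp; try ring; try (field_simp; ring))) h

lemma st_Wmy (hq0 : q ≠ 0) (D : AltData F q A) (k : ℕ) :
    D.Wm k * D.Wp 0 - D.Wp 0 * D.Wm k = (q⁻¹ * (q - q⁻¹)) • (D.Gt (k + 1) - D.G (k + 1)) := by
  have h := D.rel2 k
  unfold br at h
  linear_combination (norm := match_scalars <;> (field_simp; try ring; try (field_simp; ring))) h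

lemma st_yWp (D : AltData F q A) (k : ℕ) :
    D.Wp 0 * D.Wp k = D.Wp k * D.Wp 0 := by
  have h := D.rel8 0 k
  unfold br at h
  exact sub_eq_zero.mp h

lemma st_xyGt (hq0 : q ≠ 0) (D : AltData F q A) (k : ℕ) :
    (D.Wm 0 * D.Wp 0) * D.Gt k - D.Gt k * (D.Wm 0 * D.Wp 0) =
      (q⁻¹ * (q - q⁻¹)) • (D.Wm 0 * D.Wp k - D.Wm k * D.Wp 0) := by
  have h1 := st_yGt hq0 D k
  have h2 := st_xGt hq0 D k
  have e1 : D.Wm 0 * (D.Wp 0 * D.Gt k) =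
      (q⁻¹ * q⁻¹) • (D.Wm 0 * (D.Gt k * D.Wp 0)) + (q⁻¹ * (q - q⁻¹)) • (D.Wm 0 * D.Wp k) := by
    rw [h1]; simp only [mul_add, mul_smul_comm]
  have e2 : D.Wm 0 * (D.Gt k * D.Wp 0) =
      (q * q) • (D.Gt k * (D.Wm 0 * D.Wp 0)) - (q * (q - q⁻¹)) • (D.Wm k * D.Wp 0) := by
    rw [← mul_assoc, h2]; simp only [sub_mul, smul_mul_assoc, mul_assoc]
  rw [mul_assoc, e1, e2]
  match_scalars <;> (field_simp; try ring; try (field_simp; ring))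

lemma st_yxGt (hq0 : q ≠ 0) (D : AltData F q A) (k : ℕ) :
    (D.Wp 0 * D.Wm 0) * D.Gt k - D.Gt k * (D.Wp 0 * D.Wm 0) =
      (q * (q - q⁻¹)) • (D.Wp k * D.Wm 0 - D.Wp 0 * D.Wm k) := by
  have h1 := st_yGt hq0 D k
  have h2 := st_xGt hq0 D k
  have e1 : D.Wp 0 * (D.Wm 0 * D.Gt k) =
      (q * q) • (D.Wp 0 * (D.Gt k * D.Wm 0)) - (q * (q - q⁻¹)) • (D.Wp 0 * D.Wm k) := by
    rw [h2]; simp only [mul_sub, mul_smul_comm]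
  have e2 : D.Wp 0 * (D.Gt k * D.Wm 0) =
      (q⁻¹ * q⁻¹) • (D.Gt k * (D.Wp 0 * D.Wm 0)) + (q⁻¹ * (q - q⁻¹)) • (D.Wp k * D.Wm 0) := by
    rw [← mul_assoc, h1]; simp only [add_mul, smul_mul_assoc, mul_assoc]
  rw [mul_assoc, e1, e2]
  match_scalars <;> (field_simp; try ring; try (field_simp; ring))

lemma st_EdelGt (hq0 : q ≠ 0) (D : AltData F q A) (k : ℕ) :
    Edel q (D.Wm 0) (D.Wp 0) * D.Gt k = D.Gt k * Edel q (D.Wm 0) (D.Wp 0) := by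
  simp only [Edel, sub_mul, mul_sub, smul_mul_assoc, mul_smul_comm]
  linear_combination (norm := match_scalars <;> (field_simp; try ring; try (field_simp; ring)))
    ((q : F) ^ 2)⁻¹ • st_yxGt hq0 D k - st_xyGt hq0 D k -
      (q⁻¹ * (q - q⁻¹)) • st_xWp hq0 D k + (q⁻¹ * (q - q⁻¹)) • st_Wmy hq0 D k

lemma st_WpEdel (hq0 : q ≠ 0) (D : AltData F q A) (k : ℕ) :
    D.Wp k * Edel q (D.Wm 0) (D.Wp 0) - Edel q (D.Wm 0) (D.Wp 0) * D.Wp k =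
      ((q⁻¹ * (q - q⁻¹)) * (1 - q⁻¹ * q⁻¹ * q⁻¹ * q⁻¹)) •
        (D.Gt (k + 1) * D.Wp 0 - D.Wp (k + 1)) := by
  have hA := st_yWp D k
  have hB := st_xWp hq0 D k
  have hC := congrArg (fun z => D.Wp 0 * z) hB
  simp only [mul_sub, mul_add, mul_smul_comm, smul_sub] at hC
  have hD := congrArg (fun z => z * D.Wm 0) hA
  simp only [mul_assoc] at hD
  have hE := congrArg (fun z => D.Wm 0 * z) hA
  have hF := congrArg (fun z => z * D.Wp 0) hB
  simp only [sub_mul, smul_mul_assoc, smul_sub, mul_assoc] at hF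
  have hG1 := st_yGt hq0 D (k + 1)
  have hG2 := st_yG hq0 D (k + 1)
  simp only [Edel, mul_sub, sub_mul, smul_mul_assoc, mul_smul_comm, mul_assoc]
  linear_combination (norm := match_scalars <;> (field_simp; try ring; try (field_simp; ring)))
    (-(q⁻¹ * q⁻¹)) • hC - (q⁻¹ * q⁻¹) • hD + hE + hF +
      (-(q⁻¹ * q⁻¹ * q⁻¹ * (q - q⁻¹))) • hG1 + (q⁻¹ * q⁻¹ * q⁻¹ * (q - q⁻¹)) • hG2

lemma st_WpEdel' (hq0 : q ≠ 0) (D : AltData F q A) (k : ℕ) :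
    D.Wp k * Edel q (D.Wm 0) (D.Wp 0) - Edel q (D.Wm 0) (D.Wp 0) * D.Wp k =
      ((q * (q - q⁻¹)) * (1 - q⁻¹ * q⁻¹ * q⁻¹ * q⁻¹)) •
        (D.Wp 0 * D.Gt (k + 1) - D.Wp (k + 1)) := by
  linear_combination (norm := match_scalars <;> (field_simp; try ring; try (field_simp; ring)))
    st_WpEdel hq0 D k + (-(q * (q - q⁻¹)) * (1 - q⁻¹ * q⁻¹ * q⁻¹ * q⁻¹)) • st_yGt hq0 D (k + 1)

lemma st_br_smul (c : F) (a b : A) : br (c • a) b = c • br a b := by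
  unfold br
  rw [smul_mul_assoc, mul_smul_comm, smul_sub]

lemma st_br_sum {ι : Type*} (s : Finset ι) (f : ι → A) (e : A) :
    br (∑ i ∈ s, f i) e = ∑ i ∈ s, br (f i) e := by
  unfold br
  rw [Finset.sum_mul, Finset.mul_sum, ← Finset.sum_sub_distrib]

lemma st_mul_br (g z e : A) (hg : e * g = g * e) : g * br z e = br (g * z) e := by
  unfold br
  rw [mul_sub, ← mul_assoc g z e, ← mul_assoc g e z, ← hg, mul_assoc e g z]

lemma st_br_mul (g z e : A) (hg : e * g = g * e) : br z e * g = br (z * g) e := by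
  unfold br
  rw [sub_mul, mul_assoc z e g, hg, ← mul_assoc z g e, mul_assoc e z g]

lemma st_xi_inv (hq0 : q ≠ 0) (hq : ∀ n : ℕ, 0 < n → q ^ n ≠ 1) :
    (xi q)⁻¹ = -((q - q⁻¹) * (q - q⁻¹)) * (q⁻¹ * q⁻¹) := by
  have hc := st_hc hq0 hq
  refine inv_eq_of_mul_eq_one_left ?_
  simp only [xi]
  have h1 : (q - q⁻¹) * (q - q⁻¹)⁻¹ = 1 := mul_inv_cancel₀ hc
  have h2 : q * q⁻¹ = 1 := mul_inv_cancel₀ hq0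
  linear_combination (((q - q⁻¹) * (q - q⁻¹)⁻¹) ^ 2 * (q * q⁻¹ + 1)) * h2 +
    ((q - q⁻¹) * (q - q⁻¹)⁻¹ + 1) * h1

lemma st_F2a (hq0 : q ≠ 0) (hq : ∀ n : ℕ, 0 < n → q ^ n ≠ 1) (D : AltData F q A) :
    ∀ n : ℕ, (q⁻¹ * (xi q)⁻¹) ^ n • D.Wp n =
      ∑ i ∈ Finset.range (n + 1),
        (q⁻¹ * (xi q)⁻¹) ^ i • (D.Gt i * Ep q (D.Wm 0) (D.Wp 0) (n - i)) := by
  have hc := st_hc hq0 hq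
  have hs := st_hs hq0 hq
  intro n
  induction n with
  | zero => simp [Ep, D.hGt0]
  | succ n ih =>
    have hstep : ∀ i ∈ Finset.range (n + 1),
        (q⁻¹ * (xi q)⁻¹) ^ i • (D.Gt i * Ep q (D.Wm 0) (D.Wp 0) (n + 1 - i)) =
          (q + q⁻¹)⁻¹ •
            br ((q⁻¹ * (xi q)⁻¹) ^ i • (D.Gt i * Ep q (D.Wm 0) (D.Wp 0) (n - i)))
              (Edel q (D.Wm 0) (D.Wp 0)) := by
      intro i hi
      rw [Finset.mem_range] at hi
      rw [show n + 1 - i = (n - i) + 1 by omega]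
      simp only [Ep]
      rw [st_br_smul, ← st_mul_br _ _ _ (st_EdelGt hq0 D i)]
      simp only [mul_smul_comm]
      match_scalars
      ring
    have hw : br (D.Wp n) (Edel q (D.Wm 0) (D.Wp 0)) =
        ((q⁻¹ * (q - q⁻¹)) * (1 - q⁻¹ * q⁻¹ * q⁻¹ * q⁻¹)) •
          (D.Gt (n + 1) * D.Wp 0 - D.Wp (n + 1)) := by
      unfold br
      exact st_WpEdel hq0 D n
    have k1 : (q + q⁻¹)⁻¹ * (q⁻¹ * (q - q⁻¹) * (1 - q⁻¹ * q⁻¹ * q⁻¹ * q⁻¹)) =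
        -(q⁻¹ * (xi q)⁻¹) := by
      rw [st_xi_inv hq0 hq, inv_mul_eq_iff_eq_mul₀ hs]
      field_simp
      ring
    rw [Finset.sum_range_succ, Finset.sum_congr rfl hstep, ← Finset.smul_sum, ← st_br_sum,
      ← ih, st_br_smul, hw, Nat.sub_self]
    simp only [Ep]
    rw [smul_smul, smul_smul]
    match_scalars <;>
      first
        | linear_combination ((q⁻¹ * (xi q)⁻¹) ^ n) * k1
        | linear_combination (-((q⁻¹ * (xi q)⁻¹) ^ n)) * k1

lemma st_F2b (hq0 : q ≠ 0) (hq : ∀ n : ℕ, 0 < n → q ^ n ≠ 1) (D : AltData F q A) :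
    ∀ n : ℕ, (q * (xi q)⁻¹) ^ n • D.Wp n =
      ∑ i ∈ Finset.range (n + 1),
        (q * (xi q)⁻¹) ^ i • (Ep q (D.Wm 0) (D.Wp 0) (n - i) * D.Gt i) := by
  have hc := st_hc hq0 hq
  have hs := st_hs hq0 hq
  intro n
  induction n with
  | zero => simp [Ep, D.hGt0]
  | succ n ih =>
    have hstep : ∀ i ∈ Finset.range (n + 1),
        (q * (xi q)⁻¹) ^ i • (Ep q (D.Wm 0) (D.Wp 0) (n + 1 - i) * D.Gt i) =
          (q + q⁻¹)⁻¹ •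
            br ((q * (xi q)⁻¹) ^ i • (Ep q (D.Wm 0) (D.Wp 0) (n - i) * D.Gt i))
              (Edel q (D.Wm 0) (D.Wp 0)) := by
      intro i hi
      rw [Finset.mem_range] at hi
      rw [show n + 1 - i = (n - i) + 1 by omega]
      simp only [Ep]
      rw [st_br_smul, ← st_br_mul _ _ _ (st_EdelGt hq0 D i)]
      simp only [smul_mul_assoc]
      match_scalars
      ring
    have hw : br (D.Wp n) (Edel q (D.Wm 0) (D.Wp 0)) =
        ((q * (q - q⁻¹)) * (1 - q⁻¹ * q⁻¹ * q⁻¹ * q⁻¹)) •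
          (D.Wp 0 * D.Gt (n + 1) - D.Wp (n + 1)) := by
      unfold br
      exact st_WpEdel' hq0 D n
    have k2 : (q + q⁻¹)⁻¹ * (q * (q - q⁻¹) * (1 - q⁻¹ * q⁻¹ * q⁻¹ * q⁻¹)) =
        -(q * (xi q)⁻¹) := by
      rw [st_xi_inv hq0 hq, inv_mul_eq_iff_eq_mul₀ hs]
      field_simp
      ring
    rw [Finset.sum_range_succ, Finset.sum_congr rfl hstep, ← Finset.smul_sum, ← st_br_sum,
      ← ih, st_br_smul, hw, Nat.sub_self]
    simp only [Ep]
    rw [smul_smul, smul_smul]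
    match_scalars <;>
      first
        | linear_combination ((q * (xi q)⁻¹) ^ n) * k2
        | linear_combination (-((q * (xi q)⁻¹) ^ n)) * k2

lemma st_coeff_smul (r : F) (f : PowerSeries A) (n : ℕ) :
    PowerSeries.coeff (R := A) n (r • f) = r • PowerSeries.coeff (R := A) n f := by simp

lemma st_Xcomm (f : PowerSeries A) : PowerSeries.X * f = f * PowerSeries.X :=
  (PowerSeries.commute_X f).symm.eq

lemma st_SA (hq0 : q ≠ 0) (hq : ∀ n : ℕ, 0 < n → q ^ n ≠ 1) (D : AltData F q A) :
    serc (q⁻¹ * (xi q)⁻¹) D.Gt * ser (Ep q (D.Wm 0) (D.Wp 0)) =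
      serc (q⁻¹ * (xi q)⁻¹) D.Wp := by
  ext n
  rw [PowerSeries.coeff_mul, Finset.Nat.sum_antidiagonal_eq_sum_range_succ_mk]
  simp only [serc, ser, PowerSeries.coeff_mk, smul_mul_assoc]
  exact (st_F2a hq0 hq D n).symm

lemma st_SB (hq0 : q ≠ 0) (hq : ∀ n : ℕ, 0 < n → q ^ n ≠ 1) (D : AltData F q A) :
    ser (Ep q (D.Wm 0) (D.Wp 0)) * serc (q * (xi q)⁻¹) D.Gt =
      serc (q * (xi q)⁻¹) D.Wp := by
  ext n
  rw [PowerSeries.coeff_mul, Finset.Nat.sum_antidiagonal_eq_sum_range_succ_mk]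
  simp only [serc, ser, PowerSeries.coeff_mk, mul_smul_comm]
  calc ∑ k ∈ Finset.range (n + 1),
      (q * (xi q)⁻¹) ^ (n - k) • (Ep q (D.Wm 0) (D.Wp 0) k * D.Gt (n - k)) =
      ∑ i ∈ Finset.range (n + 1),
        (q * (xi q)⁻¹) ^ i • (Ep q (D.Wm 0) (D.Wp 0) (n - i) * D.Gt i) := by
        rw [← Finset.sum_range_reflect
          (fun i => (q * (xi q)⁻¹) ^ i • (Ep q (D.Wm 0) (D.Wp 0) (n - i) * D.Gt i)) (n + 1)]
        apply Finset.sum_congr rfl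
        intro i hi
        rw [Finset.mem_range] at hi
        rw [show n + 1 - 1 - i = n - i by omega, show n - (n - i) = i by omega]
    _ = (q * (xi q)⁻¹) ^ n • D.Wp n := (st_F2b hq0 hq D n).symm

lemma st_SC (hq0 : q ≠ 0) (hq : ∀ n : ℕ, 0 < n → q ^ n ≠ 1) (D : AltData F q A) :
    (-(q - q⁻¹)) • ser (Ed q (D.Wm 0) (D.Wp 0)) =
      1 - (q - q⁻¹) • (PowerSeries.X *
        ((q⁻¹ * q⁻¹) • (ser (Ep q (D.Wm 0) (D.Wp 0)) * PowerSeries.C (R := A) (D.Wm 0)) -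
          PowerSeries.C (R := A) (D.Wm 0) * ser (Ep q (D.Wm 0) (D.Wp 0)))) := by
  have hc := st_hc hq0 hq
  ext n
  cases n with
  | zero =>
    have h0 : (PowerSeries.coeff (R := A) 0) (PowerSeries.X *
        ((q⁻¹ * q⁻¹) • (ser (Ep q (D.Wm 0) (D.Wp 0)) * PowerSeries.C (R := A) (D.Wm 0)) -
          PowerSeries.C (R := A) (D.Wm 0) * ser (Ep q (D.Wm 0) (D.Wp 0)))) = 0 :=
      PowerSeries.coeff_zero_X_mul _
    simp only [st_coeff_smul, map_sub, h0, smul_zero, sub_zero, PowerSeries.coeff_one,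
      if_pos rfl, ser, PowerSeries.coeff_mk, Ed]
    rw [smul_smul, neg_mul_neg, mul_inv_cancel₀ hc, one_smul]
    simp
  | succ n =>
    simp only [st_coeff_smul, map_sub, PowerSeries.coeff_succ_X_mul, PowerSeries.coeff_one,
      Nat.succ_ne_zero, if_false, PowerSeries.coeff_mul_C, PowerSeries.coeff_C_mul, ser,
      PowerSeries.coeff_mk, Ed]
    rw [show ((q : F) ^ 2)⁻¹ = q⁻¹ * q⁻¹ by rw [sq, mul_inv]]
    module

lemma st_SD (hq0 : q ≠ 0) (hq : ∀ n : ℕ, 0 < n → q ^ n ≠ 1) (D : AltData F q A) :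
    (q - q⁻¹) • serc (q⁻¹ * (xi q)⁻¹) D.Wm =
      q • (serc (q⁻¹ * (xi q)⁻¹) D.Gt * PowerSeries.C (R := A) (D.Wm 0)) -
        q⁻¹ • (PowerSeries.C (R := A) (D.Wm 0) * serc (q⁻¹ * (xi q)⁻¹) D.Gt) := by
  have hc := st_hc hq0 hq
  have hcw : ∀ k : ℕ, (q - q⁻¹) • D.Wm k =
      q • (D.Gt k * D.Wm 0) - q⁻¹ • (D.Wm 0 * D.Gt k) := by
    intro k
    linear_combination (norm := match_scalars <;> (field_simp; try ring; try (field_simp; ring)))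
      q⁻¹ • st_xGt hq0 D k
  ext n
  simp only [st_coeff_smul, map_sub, PowerSeries.coeff_mul_C, PowerSeries.coeff_C_mul,
    serc, PowerSeries.coeff_mk, smul_mul_assoc, mul_smul_comm]
  have h2 := congrArg (fun z => ((q⁻¹ * (xi q)⁻¹) ^ n : F) • z) (hcw n)
  simp only [smul_sub, smul_smul] at h2
  linear_combination (norm := match_scalars <;> ring) h2

lemma st_SE (hq0 : q ≠ 0) (hq : ∀ n : ℕ, 0 < n → q ^ n ≠ 1) (D : AltData F q A) :
    serc (q⁻¹ * (xi q)⁻¹) D.Gt - serc (q⁻¹ * (xi q)⁻¹) D.G =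
      ((q * (q - q⁻¹)⁻¹) * (q⁻¹ * (xi q)⁻¹)) • (PowerSeries.X *
        (PowerSeries.C (R := A) (D.Wm 0) * serc (q⁻¹ * (xi q)⁻¹) D.Wp -
          serc (q⁻¹ * (xi q)⁻¹) D.Wp * PowerSeries.C (R := A) (D.Wm 0))) := by
  have hc := st_hc hq0 hq
  have hxi := st_hxi hq0 hq
  ext n
  cases n with
  | zero =>
    simp [serc, D.hGt0, D.hG0, PowerSeries.coeff_zero_X_mul]
  | succ n =>
    simp only [st_coeff_smul, map_sub, PowerSeries.coeff_succ_X_mul, PowerSeries.coeff_mul_C,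
      PowerSeries.coeff_C_mul, serc, PowerSeries.coeff_mk, smul_mul_assoc, mul_smul_comm]
    have h21 : q * q - 1 ≠ 0 := by
      intro h
      exact hq 2 two_pos (by rw [pow_two]; exact sub_eq_zero.mp h)
    have hone : (q * (q - q⁻¹)⁻¹) * (q⁻¹ * (q - q⁻¹)) = 1 := by
      field_simp
      exact div_self (by rw [sq]; exact h21)
    have hgg : D.Gt (n + 1) - D.G (n + 1) =
        (q * (q - q⁻¹)⁻¹) • (D.Wm 0 * D.Wp n - D.Wp n * D.Wm 0) := by
      rw [st_xWp hq0 D n, smul_smul, hone, one_smul]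
    have h2 := congrArg (fun z => ((q⁻¹ * (xi q)⁻¹) ^ (n + 1) : F) • z) hgg
    simp only [smul_sub, smul_smul] at h2
    linear_combination (norm := match_scalars <;> ring) h2

lemma st_scal (hq0 : q ≠ 0) (hq : ∀ n : ℕ, 0 < n → q ^ n ≠ 1) (n k : ℕ) (hk : k ≤ n) :
    ((xi q)⁻¹) ^ n * q ^ ((n : ℤ) - 2 * (k : ℤ)) =
      (q⁻¹ * (xi q)⁻¹) ^ k * (q * (xi q)⁻¹) ^ (n - k) := by
  have hxi := st_hxi hq0 hq
  have h1 : (n : ℤ) - 2 * (k : ℤ) = ((n - k : ℕ) : ℤ) - (k : ℤ) := by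
    rw [Nat.cast_sub hk]; ring
  rw [h1, zpow_sub₀ hq0, zpow_natCast, zpow_natCast, mul_pow, mul_pow]
  conv_lhs => rw [← pow_sub_mul_pow ((xi q)⁻¹) hk]
  field_simp
  rw [← mul_pow, mul_one_div_cancel hq0, one_pow]

lemma st_SF (hq0 : q ≠ 0) (hq : ∀ n : ℕ, 0 < n → q ^ n ≠ 1) (D : AltData F q A) :
    serc ((xi q)⁻¹) (Zv q D) =
      serc (q⁻¹ * (xi q)⁻¹) D.G * serc (q * (xi q)⁻¹) D.Gt -
        (q * (xi q)⁻¹) • (PowerSeries.X *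
          (serc (q⁻¹ * (xi q)⁻¹) D.Wm * serc (q * (xi q)⁻¹) D.Wp)) := by
  ext n
  cases n with
  | zero =>
    simp [Zv, serc, D.hG0, D.hGt0, PowerSeries.coeff_zero_X_mul, st_coeff_smul]
  | succ m =>
    simp only [map_sub, st_coeff_smul, PowerSeries.coeff_succ_X_mul]
    rw [PowerSeries.coeff_mul, Finset.Nat.sum_antidiagonal_eq_sum_range_succ_mk,
      PowerSeries.coeff_mul, Finset.Nat.sum_antidiagonal_eq_sum_range_succ_mk]
    simp only [serc, PowerSeries.coeff_mk, smul_mul_assoc, mul_smul_comm, smul_smul, Zv,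
      smul_sub, Finset.smul_sum, Nat.add_sub_cancel]
    congr 1
    · apply Finset.sum_congr rfl
      intro k hk
      rw [Finset.mem_range] at hk
      have hsc := st_scal hq0 hq (m + 1) k (by omega)
      push_cast at hsc
      match_scalars
      push_cast
      linear_combination hsc
    · apply Finset.sum_congr rfl
      intro k hk
      rw [Finset.mem_range] at hk
      rw [show ((m + 1 : ℕ) : ℤ) - 1 - 2 * (k : ℤ) = (m : ℤ) - 2 * (k : ℤ) by push_cast; ring]
      have hsc := st_scal hq0 hq m k (by omega)
      push_cast at hsc
      match_scalars
      push_cast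
      linear_combination (q * (xi q)⁻¹) * hsc

lemma st_main (hq0 : q ≠ 0) (hq : ∀ n : ℕ, 0 < n → q ^ n ≠ 1) (D : AltData F q A) :
    serc (q⁻¹ * (xi q)⁻¹) D.Gt * ((-(q - q⁻¹)) • ser (Ed q (D.Wm 0) (D.Wp 0))) *
      serc (q * (xi q)⁻¹) D.Gt = serc ((xi q)⁻¹) (Zv q D) := by
  have hc := st_hc hq0 hq
  have hxi := st_hxi hq0 hq
  have h21 : q ^ 2 - 1 ≠ 0 := fun h => hq 2 two_pos (sub_eq_zero.mp h)
  have h46 : -q ^ 4 + q ^ 6 ≠ 0 := by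
    intro h
    apply h21
    have h4 : (q ^ 4 : F) ≠ 0 := pow_ne_zero 4 hq0
    have : q ^ 4 * (q ^ 2 - 1) = 0 := by linear_combination h
    rcases mul_eq_zero.mp this with h' | h'
    · exact absurd h' h4
    · exact h'
  have h57 : -q ^ 5 + q ^ 7 ≠ 0 := by
    intro h
    apply h21
    have h5 : (q ^ 5 : F) ≠ 0 := pow_ne_zero 5 hq0
    have : q ^ 5 * (q ^ 2 - 1) = 0 := by linear_combination h
    rcases mul_eq_zero.mp this with h' | h'
    · exact absurd h' h5
    · exact h'
  have hA := congrArg (fun z => serc (q⁻¹ * (xi q)⁻¹) D.Gt * (z * serc (q * (xi q)⁻¹) D.Gt))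
    (st_SC hq0 hq D)
  have hC := congrArg (fun z => z * (ser (Ep q (D.Wm 0) (D.Wp 0)) *
    (PowerSeries.C (R := A) (D.Wm 0) * serc (q * (xi q)⁻¹) D.Gt)))
    (st_Xcomm (serc (q⁻¹ * (xi q)⁻¹) D.Gt))
  have hH := congrArg (fun z => z * (PowerSeries.C (R := A) (D.Wm 0) *
    (ser (Ep q (D.Wm 0) (D.Wp 0)) * serc (q * (xi q)⁻¹) D.Gt)))
    (st_Xcomm (serc (q⁻¹ * (xi q)⁻¹) D.Gt))
  have hE := congrArg (fun z => PowerSeries.X *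
    (z * (PowerSeries.C (R := A) (D.Wm 0) * serc (q * (xi q)⁻¹) D.Gt))) (st_SA hq0 hq D)
  have hB := congrArg (fun z => PowerSeries.X * (serc (q⁻¹ * (xi q)⁻¹) D.Wm * z))
    (st_SB hq0 hq D)
  have hF := congrArg (fun z => PowerSeries.X *
    (z * (ser (Ep q (D.Wm 0) (D.Wp 0)) * serc (q * (xi q)⁻¹) D.Gt))) (st_SD hq0 hq D)
  have hG := congrArg (fun z => PowerSeries.X * (PowerSeries.C (R := A) (D.Wm 0) *
    (z * serc (q * (xi q)⁻¹) D.Gt))) (st_SA hq0 hq D)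
  have hI := congrArg (fun z => z * serc (q * (xi q)⁻¹) D.Gt) (st_SE hq0 hq D)
  have hZ := st_SF hq0 hq D
  have FLgoal : True := trivial
  repeat' skip
  try simp only [mul_sub, sub_mul, mul_add, add_mul, smul_sub, smul_add, mul_smul_comm,
    smul_mul_assoc, smul_smul, mul_assoc, one_mul, mul_one] at hA
  try simp only [mul_sub, sub_mul, mul_add, add_mul, smul_sub, smul_add, mul_smul_comm,
    smul_mul_assoc, smul_smul, mul_assoc, one_mul, mul_one] at hB
  try simp only [mul_sub, sub_mul, mul_add, add_mul, smul_sub, smul_add, mul_smul_comm,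
    smul_mul_assoc, smul_smul, mul_assoc, one_mul, mul_one] at hC
  try simp only [mul_sub, sub_mul, mul_add, add_mul, smul_sub, smul_add, mul_smul_comm,
    smul_mul_assoc, smul_smul, mul_assoc, one_mul, mul_one] at hE
  try simp only [mul_sub, sub_mul, mul_add, add_mul, smul_sub, smul_add, mul_smul_comm,
    smul_mul_assoc, smul_smul, mul_assoc, one_mul, mul_one] at hF
  try simp only [mul_sub, sub_mul, mul_add, add_mul, smul_sub, smul_add, mul_smul_comm,
    smul_mul_assoc, smul_smul, mul_assoc, one_mul, mul_one] at hG
  try simp only [mul_sub, sub_mul, mul_add, add_mul, smul_sub, smul_add, mul_smul_comm,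
    smul_mul_assoc, smul_smul, mul_assoc, one_mul, mul_one] at hH
  try simp only [mul_sub, sub_mul, mul_add, add_mul, smul_sub, smul_add, mul_smul_comm,
    smul_mul_assoc, smul_smul, mul_assoc, one_mul, mul_one] at hI
  try simp only [mul_sub, sub_mul, mul_add, add_mul, smul_sub, smul_add, mul_smul_comm,
    smul_mul_assoc, smul_smul, mul_assoc, one_mul, mul_one] at hZ
  try simp only [mul_sub, sub_mul, mul_add, add_mul, smul_sub, smul_add, mul_smul_comm,
    smul_mul_assoc, smul_smul, mul_assoc, one_mul, mul_one]
  linear_combination (norm := match_scalars <;>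
      (try simp only [st_xi_inv hq0 hq]
       try field_simp
       try ring
       try (field_simp; ring)))
    hA + ((q - q⁻¹) * (q⁻¹ * q⁻¹)) • hC - (q - q⁻¹) • hH - ((q - q⁻¹) * (q⁻¹ * q⁻¹)) • hE -
      (q * (xi q)⁻¹) • hB + (q * (xi q)⁻¹ * (q - q⁻¹)⁻¹) • hF -
      ((xi q)⁻¹ * (q - q⁻¹)⁻¹) • hG + hI - hZ

end Stmt15Aux

/-- `-(q-q⁻¹)E(t) = (𝒢̃(q⁻¹ξ⁻¹t))⁻¹ 𝒵∨(ξ⁻¹t) (𝒢̃(qξ⁻¹t))⁻¹` in the power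
series ring in `t` over `𝒰_q^+`, where `ξ = -q²(q-q⁻¹)⁻²` and the inverses are taken in
the group of units of the power series ring (the series `𝒢̃` has constant coefficient
`1`, hence is invertible). -/
theorem stmt15 {F : Type*} [Field F] (q : F) (hq0 : q ≠ 0)
    (hq : ∀ n : ℕ, 0 < n → q ^ n ≠ 1)
    {A : Type*} [Ring A] [Algebra F A] (D : AltData F q A) :
    (∃ u : (PowerSeries A)ˣ, (u : PowerSeries A) = serc (q⁻¹ * (xi q)⁻¹) D.Gt) ∧
    (∃ u : (PowerSeries A)ˣ, (u : PowerSeries A) = serc (q * (xi q)⁻¹) D.Gt) ∧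
    ∀ u1 u2 : (PowerSeries A)ˣ,
      (u1 : PowerSeries A) = serc (q⁻¹ * (xi q)⁻¹) D.Gt →
      (u2 : PowerSeries A) = serc (q * (xi q)⁻¹) D.Gt →
      (-(q - q⁻¹)) • ser (Ed q (D.Wm 0) (D.Wp 0)) =
        ↑u1⁻¹ * serc ((xi q)⁻¹) (Zv q D) * ↑u2⁻¹ := by
  refine ⟨st_exists_unit _ (by simp [serc, D.hGt0]),
    st_exists_unit _ (by simp [serc, D.hGt0]), ?_⟩
  intro u1 u2 h1 h2
  have key : (u1 : PowerSeries A) * ((-(q - q⁻¹)) • ser (Ed q (D.Wm 0) (D.Wp 0))) *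
      (u2 : PowerSeries A) = serc ((xi q)⁻¹) (Zv q D) := by
    rw [h1, h2]
    exact st_main hq0 hq D
  calc (-(q - q⁻¹)) • ser (Ed q (D.Wm 0) (D.Wp 0))
      = (↑u1⁻¹ : PowerSeries A) *
          ((u1 : PowerSeries A) * ((-(q - q⁻¹)) • ser (Ed q (D.Wm 0) (D.Wp 0))) *
            (u2 : PowerSeries A)) * (↑u2⁻¹ : PowerSeries A) := by
        rw [mul_assoc ((u1 : PowerSeries A)), Units.inv_mul_cancel_left,
          Units.mul_inv_cancel_right]
    _ = ↑u1⁻¹ * serc ((xi q)⁻¹) (Zv q D) * ↑u2⁻¹ := by rw [key]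
end
end

section
/- In 𝒰_q^+, the element 𝒢̃_{k+1} commutes with the element E_{nδ} for all k, n ∈ ℕ. -/
noncomputable section

set_option maxHeartbeats 2000000

namespace S16

variable {F : Type*} [Field F] {A : Type*} [Ring A] [Algebra F A]

lemma br_zero_left (y : A) : br (0 : A) y = 0 := by simp [br]
lemma br_smul_left (s : F) (x y : A) : br (s • x) y = s • br x y := by
  simp [br, smul_mul_assoc, mul_smul_comm, smul_sub]
lemma br_smul_right (s : F) (x y : A) : br x (s • y) = s • br x y := by
  simp [br, smul_mul_assoc, mul_smul_comm, smul_sub]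
lemma br_sub_right (x y z : A) : br x (y - z) = br x y - br x z := by
  simp only [br]; noncomm_ring
lemma br_sub_left (x y z : A) : br (x - y) z = br x z - br y z := by
  simp only [br]; noncomm_ring
lemma qbr_smul_left (q s : F) (x y : A) : qbr q (s • x) y = s • qbr q x y := by
  simp [qbr, smul_mul_assoc, mul_smul_comm, smul_sub, smul_smul, mul_comm]
lemma qbr_smul_right (q s : F) (x y : A) : qbr q x (s • y) = s • qbr q x y := by
  simp [qbr, smul_mul_assoc, mul_smul_comm, smul_sub, smul_smul, mul_comm]
lemma qbr_one_right (q : F) (x : A) : qbr q x 1 = (q - q⁻¹) • x := by simp [qbr, sub_smul]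
lemma qbr_one_left (q : F) (x : A) : qbr q (1 : A) x = (q - q⁻¹) • x := by simp [qbr, sub_smul]
lemma jacobi (x y z : A) : br x (br y z) = br (br x y) z + br y (br x z) := by
  simp only [br]; noncomm_ring
lemma jacT (x y z : A) : br (br x y) z = br (br x z) y + br x (br y z) := by
  simp only [br]; noncomm_ring
lemma gbrD {g d : A} (h : br g d = 0) (u : A) : g * br d u = br d (g * u) := by
  have h2 : g * br d u - br d (g * u) = br g d * u := by simp only [br]; noncomm_ring
  rw [h, zero_mul, sub_eq_zero] at h2; exact h2

variable (q : F) (D : AltData F q A)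

def DD : A := Edel q (D.Wm 0) (D.Wp 0)
def EE (r : ℕ) : A := Em q (D.Wm 0) (D.Wp 0) r
def PP (n : ℕ) : A := Ep q (D.Wm 0) (D.Wp 0) n
def YY (r j : ℕ) : A := qbr q (D.Gt j) (EE q D r)
def XX (n i : ℕ) : A := qbr q (PP q D n) (D.Gt i)

lemma dressM : ∀ x, qbr q (D.Gt x) (D.Wm 0) = (q - q⁻¹) • D.Wm x := by
  intro x
  cases x with
  | zero => rw [D.hGt0, qbr_one_left]
  | succ k => exact D.rel4 k

lemma dressP : ∀ x, qbr q (D.Wp 0) (D.Gt x) = (q - q⁻¹) • D.Wp x := by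
  intro x
  cases x with
  | zero => rw [D.hGt0, qbr_one_right]
  | succ k => exact D.rel6 k

lemma gtcomm : ∀ x y, br (D.Gt x) (D.Gt y) = 0 := by
  intro x y
  match x, y with
  | 0, y => simp [D.hGt0, br]
  | x+1, 0 => simp [D.hGt0, br]
  | x+1, y+1 => exact D.rel15 x y

lemma comm1 (hq0 : q ≠ 0) : ∀ x, br (D.Gt x) (DD q D) = 0 := by
  intro x
  cases x with
  | zero => simp [D.hGt0, br]
  | succ k =>
    have cert : br (D.Gt (k+1)) (DD q D)
        = (-(q⁻¹)) • ((qbr q (D.Wp 0) (D.Gt (k+1)) - (q - q⁻¹) • D.Wp (k+1)) * D.Wm 0)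
          + q⁻¹ • (D.Wp 0 * (qbr q (D.Gt (k+1)) (D.Wm 0) - (q - q⁻¹) • D.Wm (k+1)))
          + (-(q⁻¹)) • ((qbr q (D.Gt (k+1)) (D.Wm 0) - (q - q⁻¹) • D.Wm (k+1)) * D.Wp 0)
          + q⁻¹ • (D.Wm 0 * (qbr q (D.Wp 0) (D.Gt (k+1)) - (q - q⁻¹) • D.Wp (k+1)))
          + (-(q⁻¹ * (q - q⁻¹))) • (br (D.Wm (k+1)) (D.Wp 0) + br (D.Wp (k+1)) (D.Wm 0)) := by
      simp only [br, qbr, DD, Edel, mul_add, add_mul, mul_sub, sub_mul, smul_mul_assoc,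
        mul_smul_comm, smul_sub, smul_add, smul_smul, mul_assoc]
      match_scalars <;> field_simp <;> ring
    rw [D.rel4 k, D.rel6 k, D.rel9 (k+1) 0] at cert
    simpa using cert

lemma keyP (hq0 : q ≠ 0) (x : ℕ) :
    br (D.Wp x) (DD q D)
      = ((1 - (q^2)⁻¹) * (1 - (q^4)⁻¹)) • (D.Gt (x+1) * D.Wp 0 - D.Wp (x+1)) := by
  have cert : br (D.Wp x) (DD q D)
      - ((1 - (q^2)⁻¹) * (1 - (q^4)⁻¹)) • (D.Gt (x+1) * D.Wp 0 - D.Wp (x+1))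
      = (-( (1 - (q^2)⁻¹) * q⁻¹ * q⁻¹ * q⁻¹)) • (qbr q (D.Wp 0) (D.Gt (x+1)) - (q - q⁻¹) • D.Wp (x+1))
        + (-((1 - (q^2)⁻¹) * q⁻¹)) • (qbr q (D.G (x+1)) (D.Wp 0) - (q - q⁻¹) • D.Wp (x+1))
        + (-(q⁻¹ * q⁻¹)) • (D.Wp 0 * (br (D.Wm 0) (D.Wp x) - (1 - (q^2)⁻¹) • (D.Gt (x+1) - D.G (x+1))))
        + (br (D.Wm 0) (D.Wp x) - (1 - (q^2)⁻¹) • (D.Gt (x+1) - D.G (x+1))) * D.Wp 0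
        + (-(q⁻¹ * q⁻¹)) • (br (D.Wp 0) (D.Wp x) * D.Wm 0)
        + D.Wm 0 * br (D.Wp 0) (D.Wp x) := by
    simp only [br, qbr, DD, Edel, mul_add, add_mul, mul_sub, sub_mul, smul_mul_assoc,
      mul_smul_comm, smul_sub, smul_add, smul_smul, mul_assoc]
    match_scalars <;> (ring_nf; try field_simp; try ring)
  rw [D.rel1 x, D.rel5 x, D.rel6 x, D.rel8 0 x] at cert
  simp only [sub_self, smul_zero, zero_mul, mul_zero, add_zero, zero_add] at cert
  exact sub_eq_zero.mp cert

lemma EEzero : EE q D 0 = D.Wm 0 := rfl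
lemma EEsucc (r : ℕ) : EE q D (r+1) = (q + q⁻¹)⁻¹ • br (DD q D) (EE q D r) := rfl
lemma PPzero : PP q D 0 = D.Wp 0 := rfl
lemma PPsucc (n : ℕ) : PP q D (n+1) = (q + q⁻¹)⁻¹ • br (PP q D n) (DD q D) := rfl

lemma YY0 (j : ℕ) : YY q D 0 j = (q - q⁻¹) • D.Wm j := by
  rw [YY, EEzero]; exact dressM q D j
lemma YYr0 (r : ℕ) : YY q D r 0 = (q - q⁻¹) • EE q D r := by
  rw [YY, D.hGt0, qbr_one_left]
lemma XX0 (i : ℕ) : XX q D 0 i = (q - q⁻¹) • D.Wp i := by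
  rw [XX, PPzero]; exact dressP q D i
lemma XXn0 (n : ℕ) : XX q D n 0 = (q - q⁻¹) • PP q D n := by
  rw [XX, D.hGt0, qbr_one_right]

lemma Yev (hq0 : q ≠ 0) (r j : ℕ) :
    YY q D (r+1) j = (q + q⁻¹)⁻¹ • br (DD q D) (YY q D r j) := by
  rw [YY, EEsucc, qbr_smul_right]
  congr 1
  have cert : qbr q (D.Gt j) (br (DD q D) (EE q D r)) - br (DD q D) (qbr q (D.Gt j) (EE q D r))
      = q • (br (D.Gt j) (DD q D) * EE q D r) - q⁻¹ • (EE q D r * br (D.Gt j) (DD q D)) := by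
    simp only [br, qbr, mul_add, add_mul, mul_sub, sub_mul, smul_mul_assoc,
      mul_smul_comm, smul_sub, smul_add, smul_smul, mul_assoc]
    match_scalars <;> ring
  rw [comm1 q D hq0 j] at cert
  simp only [zero_mul, mul_zero, smul_zero, sub_zero, sub_self] at cert
  rw [sub_eq_zero] at cert
  rw [cert, YY]

lemma Xev (hq0 : q ≠ 0) (n i : ℕ) :
    XX q D (n+1) i = (q + q⁻¹)⁻¹ • br (XX q D n i) (DD q D) := by
  rw [XX, PPsucc, qbr_smul_left]
  congr 1
  have cert : qbr q (br (PP q D n) (DD q D)) (D.Gt i) - br (qbr q (PP q D n) (D.Gt i)) (DD q D)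
      = q⁻¹ • (br (D.Gt i) (DD q D) * PP q D n) - q • (PP q D n * br (D.Gt i) (DD q D)) := by
    simp only [br, qbr, mul_add, add_mul, mul_sub, sub_mul, smul_mul_assoc,
      mul_smul_comm, smul_sub, smul_add, smul_smul, mul_assoc]
    match_scalars <;> ring
  rw [comm1 q D hq0 i] at cert
  simp only [zero_mul, mul_zero, smul_zero, sub_zero, zero_sub, neg_eq_zero, sub_self] at cert
  rw [sub_eq_zero] at cert
  rw [cert, XX]

lemma gYev (hq0 : q ≠ 0) (x r j : ℕ) :
    br (D.Gt x) (YY q D (r+1) j)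
      = (q + q⁻¹)⁻¹ • br (DD q D) (br (D.Gt x) (YY q D r j)) := by
  rw [Yev q D hq0, br_smul_right, jacobi, comm1 q D hq0 x, br_zero_left, zero_add]

lemma gEev (hq0 : q ≠ 0) (x r : ℕ) :
    br (D.Gt x) (EE q D (r+1))
      = (q + q⁻¹)⁻¹ • br (DD q D) (br (D.Gt x) (EE q D r)) := by
  rw [EEsucc, br_smul_right, jacobi, comm1 q D hq0 x, br_zero_left, zero_add]

lemma brYev (hq0 : q ≠ 0) (Z : A) (r j : ℕ) :
    br Z (YY q D (r+1) j)
      = (q + q⁻¹)⁻¹ • (br (br Z (DD q D)) (YY q D r j) + br (DD q D) (br Z (YY q D r j))) := by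
  rw [Yev q D hq0, br_smul_right, jacobi]

lemma brEev (Z : A) (r : ℕ) :
    br Z (EE q D (r+1))
      = (q + q⁻¹)⁻¹ • (br (br Z (DD q D)) (EE q D r) + br (DD q D) (br Z (EE q D r))) := by
  rw [EEsucc, br_smul_right, jacobi]

lemma gMulBrD (hq0 : q ≠ 0) (x : ℕ) (u : A) :
    D.Gt x * br (DD q D) u = br (DD q D) (D.Gt x * u) :=
  gbrD (comm1 q D hq0 x) u

lemma br_zero_right (x : A) : br x (0 : A) = 0 := by simp [br]

lemma gtmul (x y : ℕ) : D.Gt x * D.Gt y = D.Gt y * D.Gt x := by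
  have h := gtcomm q D x y
  rw [br, sub_eq_zero] at h
  exact h

lemma GS (hq0 : q ≠ 0) : ∀ r i j,
    br (D.Gt (i+1)) (YY q D r (j+1)) - br (D.Gt (i+2)) (YY q D r j)
      = (q - q⁻¹) • (D.Gt (j+1) * br (D.Gt (i+1)) (EE q D r)
          - D.Gt (i+1) * br (D.Gt (j+1)) (EE q D r)) := by
  intro r
  induction r with
  | zero =>
    intro i j
    rw [YY0, YY0, br_smul_right, br_smul_right, EEzero]
    rw [← sub_eq_zero]
    have h11 : br (D.Wm j) (D.Gt (i+2)) + br (D.Gt (j+1)) (D.Wm (i+1)) = 0 := D.rel11 j (i+1)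
    have cert : ((q-q⁻¹) • br (D.Gt (i+1)) (D.Wm (j+1)) - (q-q⁻¹) • br (D.Gt (i+2)) (D.Wm j))
        - (q-q⁻¹) • (D.Gt (j+1) * br (D.Gt (i+1)) (D.Wm 0) - D.Gt (i+1) * br (D.Gt (j+1)) (D.Wm 0))
      = -(br (D.Gt (i+1)) (qbr q (D.Gt (j+1)) (D.Wm 0) - (q-q⁻¹) • D.Wm (j+1)))
        + br (D.Gt (j+1)) (qbr q (D.Gt (i+1)) (D.Wm 0) - (q-q⁻¹) • D.Wm (i+1))
        + (q-q⁻¹) • (br (D.Wm j) (D.Gt (i+2)) + br (D.Gt (j+1)) (D.Wm (i+1)))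
        + (2*q - q⁻¹) • (br (D.Gt (i+1)) (D.Gt (j+1)) * D.Wm 0)
        - q⁻¹ • (D.Wm 0 * br (D.Gt (i+1)) (D.Gt (j+1))) := by
      simp only [br, qbr, mul_add, add_mul, mul_sub, sub_mul, smul_mul_assoc,
        mul_smul_comm, smul_sub, smul_add, smul_smul, mul_assoc]
      match_scalars <;> (ring_nf; try field_simp; try ring)
    rw [dressM q D (j+1), dressM q D (i+1), h11, gtcomm q D (i+1) (j+1)] at cert
    simpa [br_zero_right] using cert
  | succ r ih =>
    intro i j
    rw [gYev q D hq0 (i+1) r (j+1), gYev q D hq0 (i+2) r j,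
        gEev q D hq0 (i+1) r, gEev q D hq0 (j+1) r,
        mul_smul_comm, mul_smul_comm, gMulBrD q D hq0, gMulBrD q D hq0,
        ← smul_sub, ← br_sub_right, ih i j, ← smul_sub, ← br_sub_right, br_smul_right]
    rw [smul_comm]

lemma Bsym (r : ℕ)
    (hSH : ∀ i j, br (D.Wp (i+1)) (YY q D r j) - br (D.Wp i) (YY q D r (j+1))
      = (q - q⁻¹) • (D.Gt (i+1) * br (D.Wp j) (EE q D r)
          - D.Gt (j+1) * br (D.Wp i) (EE q D r))) :
    ∀ i j, br (D.Wp i) (YY q D r j) = br (D.Wp j) (YY q D r i) := by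
  have adj : ∀ k, br (D.Wp (k+1)) (YY q D r k) = br (D.Wp k) (YY q D r (k+1)) := by
    intro k
    have h := hSH k k
    simp only [sub_self, smul_zero] at h
    exact sub_eq_zero.mp h
  have drop : ∀ a b, br (D.Wp (a+1)) (YY q D r b) - br (D.Wp b) (YY q D r (a+1))
      = br (D.Wp a) (YY q D r (b+1)) - br (D.Wp (b+1)) (YY q D r a) := by
    intro a b
    have h1 := hSH a b
    have h2 := hSH b a
    have cert : (br (D.Wp (a+1)) (YY q D r b) - br (D.Wp b) (YY q D r (a+1)))
        - (br (D.Wp a) (YY q D r (b+1)) - br (D.Wp (b+1)) (YY q D r a))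
      = ((br (D.Wp (a+1)) (YY q D r b) - br (D.Wp a) (YY q D r (b+1)))
          - (q - q⁻¹) • (D.Gt (a+1) * br (D.Wp b) (EE q D r)
              - D.Gt (b+1) * br (D.Wp a) (EE q D r)))
        + ((br (D.Wp (b+1)) (YY q D r a) - br (D.Wp b) (YY q D r (a+1)))
          - (q - q⁻¹) • (D.Gt (b+1) * br (D.Wp a) (EE q D r)
              - D.Gt (a+1) * br (D.Wp b) (EE q D r))) := by
      match_scalars <;> ring
    rw [h1, h2] at cert
    simp only [sub_self, add_zero] at cert
    exact sub_eq_zero.mp cert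
  have aux : ∀ k a, br (D.Wp (a+k)) (YY q D r a) = br (D.Wp a) (YY q D r (a+k)) := by
    intro k
    induction k using Nat.strong_induction_on with
    | _ k IH =>
      intro a
      match k with
      | 0 => rfl
      | 1 => exact adj a
      | (k+2) =>
        have hd := drop (a+k+1) a
        have hIH := IH k (by omega) (a+1)
        have e1 : a+1+k = a+k+1 := by omega
        rw [e1] at hIH
        rw [hIH, sub_self] at hd
        have e2 : a+(k+2) = a+k+1+1 := by omega
        rw [e2]
        exact sub_eq_zero.mp hd
  intro i j
  rcases Nat.le_total i j with h | h
  · obtain ⟨k, rfl⟩ := Nat.exists_eq_add_of_le h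
    exact (aux k i).symm
  · obtain ⟨k, rfl⟩ := Nat.exists_eq_add_of_le h
    exact aux k j

lemma SH (hq0 : q ≠ 0) : ∀ r i j,
    br (D.Wp (i+1)) (YY q D r j) - br (D.Wp i) (YY q D r (j+1))
      = (q - q⁻¹) • (D.Gt (i+1) * br (D.Wp j) (EE q D r)
          - D.Gt (j+1) * br (D.Wp i) (EE q D r)) := by
  intro r
  induction r with
  | zero =>
    intro i j
    rw [YY0, YY0, br_smul_right, br_smul_right, EEzero, ← sub_eq_zero]
    have h9 : br (D.Wm j) (D.Wp (i+1)) + br (D.Wp j) (D.Wm (i+1)) = 0 := D.rel9 j (i+1)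
    have h13 : br (D.Wp j) (D.Gt (i+1)) + br (D.Gt (j+1)) (D.Wp i) = 0 := D.rel13 j i
    have h16 := D.rel16 i j
    have h15 := D.rel15 i j
    have cert : ((q-q⁻¹) • br (D.Wp (i+1)) (D.Wm j) - (q-q⁻¹) • br (D.Wp i) (D.Wm (j+1)))
        - (q-q⁻¹) • (D.Gt (i+1) * br (D.Wp j) (D.Wm 0) - D.Gt (j+1) * br (D.Wp i) (D.Wm 0))
      = (-(q-q⁻¹)) • (br (D.Wm j) (D.Wp (i+1)) + br (D.Wp j) (D.Wm (i+1)))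
        + br (qbr q (D.Gt (i+1)) (D.Wm 0) - (q-q⁻¹) • D.Wm (i+1)) (D.Wp j)
        - br (qbr q (D.Gt (j+1)) (D.Wm 0) - (q-q⁻¹) • D.Wm (j+1)) (D.Wp i)
        - q⁻¹ • br (D.Gt (i+1)) (br (D.Wm 0) (D.Wp j) - (1 - (q^2)⁻¹) • (D.Gt (j+1) - D.G (j+1)))
        + q⁻¹ • br (D.Gt (j+1)) (br (D.Wm 0) (D.Wp i) - (1 - (q^2)⁻¹) • (D.Gt (i+1) - D.G (i+1)))
        + (-(2 * q⁻¹ * (1 - (q^2)⁻¹))) • br (D.Gt (i+1)) (D.Gt (j+1))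
        + (q⁻¹ * (1 - (q^2)⁻¹)) • (br (D.Gt (i+1)) (D.G (j+1)) + br (D.G (i+1)) (D.Gt (j+1)))
        + q • ((br (D.Wp j) (D.Gt (i+1)) + br (D.Gt (j+1)) (D.Wp i)) * D.Wm 0)
        - q⁻¹ • (D.Wm 0 * (br (D.Wp j) (D.Gt (i+1)) + br (D.Gt (j+1)) (D.Wp i))) := by
      simp only [br, qbr, mul_add, add_mul, mul_sub, sub_mul, smul_mul_assoc,
        mul_smul_comm, smul_sub, smul_add, smul_smul, mul_assoc]
      match_scalars <;> (ring_nf; try field_simp; try ring)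
    rw [h9, h13, h16, h15, D.rel4 i, D.rel4 j, D.rel1 i, D.rel1 j] at cert
    simpa [br_zero_right, br_zero_left] using cert
  | succ r ih =>
    have hB := Bsym q D r ih
    intro i j
    have hb0 : br (D.Wp 0) (YY q D r j) = (q-q⁻¹) • br (D.Wp j) (EE q D r) := by
      rw [hB 0 j, YYr0, br_smul_right]
    have hb1 : br (D.Wp 0) (YY q D r (j+1)) = (q-q⁻¹) • br (D.Wp (j+1)) (EE q D r) := by
      rw [hB 0 (j+1), YYr0, br_smul_right]
    have hgg := gtmul q D (i+1) (j+1)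
    have h1 : br (D.Wp (i+2)) (YY q D r j) - br (D.Wp (i+1)) (YY q D r (j+1))
        = (q - q⁻¹) • (D.Gt (i+2) * br (D.Wp j) (EE q D r)
            - D.Gt (j+1) * br (D.Wp (i+1)) (EE q D r)) := ih (i+1) j
    have h2 := GS q D hq0 r i j
    have hG2 : br (D.Gt (i+2) * D.Wp 0 - D.Wp (i+2)) (YY q D r j)
             - br (D.Gt (i+1) * D.Wp 0 - D.Wp (i+1)) (YY q D r (j+1))
        = (q-q⁻¹) • (D.Gt (i+1) * br (D.Gt (j+1) * D.Wp 0 - D.Wp (j+1)) (EE q D r)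
            - D.Gt (j+1) * br (D.Gt (i+1) * D.Wp 0 - D.Wp (i+1)) (EE q D r)) := by
      rw [← sub_eq_zero]
      have cert : (br (D.Gt (i+2) * D.Wp 0 - D.Wp (i+2)) (YY q D r j)
             - br (D.Gt (i+1) * D.Wp 0 - D.Wp (i+1)) (YY q D r (j+1)))
          - ((q-q⁻¹) • (D.Gt (i+1) * br (D.Gt (j+1) * D.Wp 0 - D.Wp (j+1)) (EE q D r)
            - D.Gt (j+1) * br (D.Gt (i+1) * D.Wp 0 - D.Wp (i+1)) (EE q D r)))
        = D.Gt (i+2) * (br (D.Wp 0) (YY q D r j) - (q-q⁻¹) • br (D.Wp j) (EE q D r))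
          - D.Gt (i+1) * (br (D.Wp 0) (YY q D r (j+1)) - (q-q⁻¹) • br (D.Wp (j+1)) (EE q D r))
          - ((br (D.Wp (i+2)) (YY q D r j) - br (D.Wp (i+1)) (YY q D r (j+1)))
             - (q-q⁻¹) • (D.Gt (i+2) * br (D.Wp j) (EE q D r)
                 - D.Gt (j+1) * br (D.Wp (i+1)) (EE q D r)))
          - ((br (D.Gt (i+1)) (YY q D r (j+1)) - br (D.Gt (i+2)) (YY q D r j))
             - (q-q⁻¹) • (D.Gt (j+1) * br (D.Gt (i+1)) (EE q D r)
                 - D.Gt (i+1) * br (D.Gt (j+1)) (EE q D r))) * D.Wp 0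
          - (q-q⁻¹) • ((D.Gt (i+1) * D.Gt (j+1) - D.Gt (j+1) * D.Gt (i+1)) * br (D.Wp 0) (EE q D r)) := by
        simp only [br, qbr, mul_add, add_mul, mul_sub, sub_mul, smul_mul_assoc,
          mul_smul_comm, smul_sub, smul_add, smul_smul, mul_assoc]
        match_scalars <;> (ring_nf; try field_simp; try ring)
      rw [hb0, hb1, h1, h2, hgg] at cert
      simpa using cert
    have hIHD : br (DD q D) (br (D.Wp (i+1)) (YY q D r j)) - br (DD q D) (br (D.Wp i) (YY q D r (j+1)))
        = (q-q⁻¹) • (br (DD q D) (D.Gt (i+1) * br (D.Wp j) (EE q D r))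
            - br (DD q D) (D.Gt (j+1) * br (D.Wp i) (EE q D r))) := by
      have h := congrArg (br (DD q D)) (ih i j)
      rw [br_sub_right, br_smul_right, br_sub_right] at h
      exact h
    have hD1 : D.Gt (i+1) * br (DD q D) (br (D.Wp j) (EE q D r))
        = br (DD q D) (D.Gt (i+1) * br (D.Wp j) (EE q D r)) := gMulBrD q D hq0 (i+1) _
    have hD2 : D.Gt (j+1) * br (DD q D) (br (D.Wp i) (EE q D r))
        = br (DD q D) (D.Gt (j+1) * br (D.Wp i) (EE q D r)) := gMulBrD q D hq0 (j+1) _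
    have k1 : br (D.Wp (i+1)) (DD q D)
        = ((1 - (q^2)⁻¹) * (1 - (q^4)⁻¹)) • (D.Gt (i+2) * D.Wp 0 - D.Wp (i+2)) := keyP q D hq0 (i+1)
    have k0 : br (D.Wp i) (DD q D)
        = ((1 - (q^2)⁻¹) * (1 - (q^4)⁻¹)) • (D.Gt (i+1) * D.Wp 0 - D.Wp (i+1)) := keyP q D hq0 i
    have kj : br (D.Wp j) (DD q D)
        = ((1 - (q^2)⁻¹) * (1 - (q^4)⁻¹)) • (D.Gt (j+1) * D.Wp 0 - D.Wp (j+1)) := keyP q D hq0 j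
    rw [brYev q D hq0 (D.Wp (i+1)) r j, brYev q D hq0 (D.Wp i) r (j+1),
        brEev q D (D.Wp j) r, brEev q D (D.Wp i) r, k1, k0, kj, ← sub_eq_zero]
    have certF : ((q + q⁻¹)⁻¹ • (br (((1 - (q^2)⁻¹) * (1 - (q^4)⁻¹)) • (D.Gt (i+2) * D.Wp 0 - D.Wp (i+2))) (YY q D r j)
            + br (DD q D) (br (D.Wp (i+1)) (YY q D r j)))
          - (q + q⁻¹)⁻¹ • (br (((1 - (q^2)⁻¹) * (1 - (q^4)⁻¹)) • (D.Gt (i+1) * D.Wp 0 - D.Wp (i+1))) (YY q D r (j+1))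
            + br (DD q D) (br (D.Wp i) (YY q D r (j+1)))))
        - ((q - q⁻¹) • (D.Gt (i+1) * ((q + q⁻¹)⁻¹ • (br (((1 - (q^2)⁻¹) * (1 - (q^4)⁻¹)) • (D.Gt (j+1) * D.Wp 0 - D.Wp (j+1))) (EE q D r)
            + br (DD q D) (br (D.Wp j) (EE q D r))))
          - D.Gt (j+1) * ((q + q⁻¹)⁻¹ • (br (((1 - (q^2)⁻¹) * (1 - (q^4)⁻¹)) • (D.Gt (i+1) * D.Wp 0 - D.Wp (i+1))) (EE q D r)
            + br (DD q D) (br (D.Wp i) (EE q D r))))))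
      = ((q + q⁻¹)⁻¹ * ((1 - (q^2)⁻¹) * (1 - (q^4)⁻¹))) •
          ((br (D.Gt (i+2) * D.Wp 0 - D.Wp (i+2)) (YY q D r j)
             - br (D.Gt (i+1) * D.Wp 0 - D.Wp (i+1)) (YY q D r (j+1)))
           - ((q-q⁻¹) • (D.Gt (i+1) * br (D.Gt (j+1) * D.Wp 0 - D.Wp (j+1)) (EE q D r)
               - D.Gt (j+1) * br (D.Gt (i+1) * D.Wp 0 - D.Wp (i+1)) (EE q D r))))
        + (q + q⁻¹)⁻¹ •
          ((br (DD q D) (br (D.Wp (i+1)) (YY q D r j)) - br (DD q D) (br (D.Wp i) (YY q D r (j+1))))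
           - (q-q⁻¹) • (br (DD q D) (D.Gt (i+1) * br (D.Wp j) (EE q D r))
               - br (DD q D) (D.Gt (j+1) * br (D.Wp i) (EE q D r))))
        + ((q + q⁻¹)⁻¹ * (q - q⁻¹)) •
          (br (DD q D) (D.Gt (i+1) * br (D.Wp j) (EE q D r))
            - D.Gt (i+1) * br (DD q D) (br (D.Wp j) (EE q D r)))
        + ((q + q⁻¹)⁻¹ * (q - q⁻¹)) •
          (D.Gt (j+1) * br (DD q D) (br (D.Wp i) (EE q D r))
            - br (DD q D) (D.Gt (j+1) * br (D.Wp i) (EE q D r))) := by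
      simp only [br_smul_left, br_sub_left, mul_add, add_mul, mul_sub, sub_mul, smul_mul_assoc,
        mul_smul_comm, smul_sub, smul_add, smul_smul, mul_assoc]
      match_scalars <;> ring
    rw [hG2, hIHD, hD1, hD2] at certF
    simpa using certF

lemma Tsym (hq0 : q ≠ 0) : ∀ n r i j,
    br (XX q D n i) (YY q D r j) = br (XX q D n j) (YY q D r i) := by
  have hB : ∀ r i j, br (D.Wp i) (YY q D r j) = br (D.Wp j) (YY q D r i) :=
    fun r => Bsym q D r (SH q D hq0 r)
  intro n
  induction n with
  | zero =>
    intro r i j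
    rw [XX0, XX0, br_smul_left, br_smul_left, hB r i j]
  | succ n ih =>
    intro r i j
    have step : ∀ a b, br (XX q D (n+1) a) (YY q D r b)
        = (q+q⁻¹)⁻¹ • br (br (XX q D n a) (YY q D r b)) (DD q D)
          + br (XX q D n a) (YY q D (r+1) b) := by
      intro a b
      rw [Xev q D hq0, br_smul_left, jacT, Yev q D hq0, br_smul_right, smul_add]
    rw [step i j, step j i, ih r i j, ih (r+1) i j]

end S16

/-- in `𝒰_q^+`, the element `𝒢̃_{k+1}` commutes with `E_{nδ}` for all
`k, n ∈ ℕ`. -/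
theorem stmt16 {F : Type*} [Field F] (q : F) (hq0 : q ≠ 0)
    (hq : ∀ n : ℕ, 0 < n → q ^ n ≠ 1)
    {A : Type*} [Ring A] [Algebra F A] (D : AltData F q A) :
    ∀ k n : ℕ, D.Gt (k + 1) * Ed q (D.Wm 0) (D.Wp 0) n =
      Ed q (D.Wm 0) (D.Wp 0) n * D.Gt (k + 1) := by
  intro k n
  have hq2 : q^2 ≠ 1 := hq 2 (by norm_num)
  have hc : q - q⁻¹ ≠ 0 := by
    intro h
    apply hq2
    have h2 : q = q⁻¹ := by
      have := sub_eq_zero.mp h; exact this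
    calc q^2 = q*q := sq q
    _ = q * q⁻¹ := by rw [← h2]
    _ = 1 := mul_inv_cancel₀ hq0
  cases n with
  | zero =>
    show D.Gt (k+1) * ((-(q - q⁻¹)⁻¹) • (1:A)) = ((-(q - q⁻¹)⁻¹) • (1:A)) * D.Gt (k+1)
    rw [mul_smul_comm, smul_mul_assoc, mul_one, one_mul]
  | succ n =>
    rw [← sub_eq_zero]
    have cert : (D.Gt (k+1) * Ed q (D.Wm 0) (D.Wp 0) (n+1) - Ed q (D.Wm 0) (D.Wp 0) (n+1) * D.Gt (k+1))
        - ((q⁻¹*(q - q⁻¹)) • br (Ep q (D.Wm 0) (D.Wp 0) n) (D.Wm (k+1))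
           - q⁻¹ • br (qbr q (Ep q (D.Wm 0) (D.Wp 0) n) (D.Gt (k+1))) (D.Wm 0))
        = q⁻¹ • (Ep q (D.Wm 0) (D.Wp 0) n * (qbr q (D.Gt (k+1)) (D.Wm 0) - (q - q⁻¹) • D.Wm (k+1))
            - (qbr q (D.Gt (k+1)) (D.Wm 0) - (q - q⁻¹) • D.Wm (k+1)) * Ep q (D.Wm 0) (D.Wp 0) n) := by
      simp only [br, qbr, Ed, Edel, mul_add, add_mul, mul_sub, sub_mul, smul_mul_assoc,
        mul_smul_comm, smul_sub, smul_add, smul_smul, mul_assoc]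
      match_scalars <;> (ring_nf; try field_simp; try ring)
    rw [D.rel4 k] at cert
    simp only [sub_self, smul_zero, mul_zero, zero_mul, sub_zero] at cert
    rw [sub_eq_zero] at cert
    rw [cert]
    have hT : br (S16.XX q D n 0) (S16.YY q D 0 (k+1)) = br (S16.XX q D n (k+1)) (S16.YY q D 0 0) :=
      S16.Tsym q D hq0 n 0 0 (k+1)
    rw [S16.XXn0, S16.YY0, S16.YYr0, S16.EEzero, S16.br_smul_left, S16.br_smul_right,
        S16.br_smul_right] at hT
    have hT2 : (q - q⁻¹) • br (S16.PP q D n) (D.Wm (k+1)) = br (S16.XX q D n (k+1)) (D.Wm 0) := by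
      have h3 := congrArg (fun z : A => (q - q⁻¹)⁻¹ • z) hT
      simpa [smul_smul, inv_mul_cancel_left₀ hc, inv_mul_cancel₀ hc] using h3
    have e1 : S16.PP q D n = Ep q (D.Wm 0) (D.Wp 0) n := rfl
    have e2 : S16.XX q D n (k+1) = qbr q (Ep q (D.Wm 0) (D.Wp 0) n) (D.Gt (k+1)) := rfl
    rw [e1, e2] at hT2
    rw [← hT2, smul_smul, sub_self]
end
end

section
/- In the formal power series ring in t over 𝒰_q^+, the following identity holds: 𝒢(t) = 𝒵^∨(qt)·(𝒢̃(q²t))⁻¹ + q²t·𝒲⁻(t)·𝒲⁺(q²t)·(𝒢̃(q²t))⁻¹. -/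
noncomputable section

lemma scal1' {F : Type*} [Field F] {q : F} (hq0 : q ≠ 0) {n k : ℕ} (hk : k ≤ n) :
    q ^ n * q ^ ((n : ℤ) - 2 * (k : ℤ)) = (q ^ 2) ^ (n - k) := by
  have h1 : (q ^ 2) ^ (n - k) = q ^ (2 * (n - k)) := by rw [pow_mul]
  rw [h1, ← zpow_natCast q n, ← zpow_natCast q (2 * (n - k)), ← zpow_add₀ hq0]
  congr 1
  push_cast [hk]
  omega

lemma scal2' {F : Type*} [Field F] {q : F} (hq0 : q ≠ 0) {n k : ℕ} (hk : k + 1 ≤ n) :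
    q ^ n * (q * q ^ ((n : ℤ) - 1 - 2 * (k : ℤ))) = q ^ 2 * (q ^ 2) ^ (n - 1 - k) := by
  have h1 : q ^ 2 * (q ^ 2) ^ (n - 1 - k) = q ^ (2 + 2 * (n - 1 - k)) := by
    rw [pow_add, pow_mul]
  rw [h1, mul_comm q (q ^ ((n : ℤ) - 1 - 2 * (k : ℤ))), ← zpow_add_one₀ hq0,
    ← zpow_natCast q n, ← zpow_natCast q (2 + 2 * (n - 1 - k)), ← zpow_add₀ hq0]
  congr 1
  push_cast
  omega

lemma unit_of_constantCoeff_one {A : Type*} [Ring A] (φ : PowerSeries A)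
    (h : PowerSeries.constantCoeff (R := A) φ = 1) :
    ∃ u : (PowerSeries A)ˣ, (u : PowerSeries A) = φ := by
  set ψ := PowerSeries.invOfUnit φ 1 with hψ
  have h1 : φ * ψ = 1 := PowerSeries.mul_invOfUnit φ 1 (by simp [h])
  have h2 : ψ * PowerSeries.invOfUnit ψ 1 = 1 :=
    PowerSeries.mul_invOfUnit ψ 1 (by simp [hψ, PowerSeries.constantCoeff_invOfUnit])
  have h3 : φ = PowerSeries.invOfUnit ψ 1 := by
    calc φ = φ * (ψ * PowerSeries.invOfUnit ψ 1) := by rw [h2, mul_one]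
    _ = (φ * ψ) * PowerSeries.invOfUnit ψ 1 := by rw [mul_assoc]
    _ = _ := by rw [h1, one_mul]
  exact ⟨⟨φ, ψ, h1, by rw [h3]; exact h2⟩, rfl⟩

lemma key19 {F : Type*} [Field F] (q : F) (hq0 : q ≠ 0) {A : Type*} [Ring A] [Algebra F A]
    (D : AltData F q A) :
    ser D.G * serc (q ^ 2) D.Gt =
      serc q (Zv q D) + (q : F) ^ 2 • (PowerSeries.X * ser D.Wm * serc (q ^ 2) D.Wp) := by
  ext n
  rw [mul_assoc]
  simp only [map_add, map_smul, PowerSeries.coeff_mul, ser, serc, Zv, PowerSeries.coeff_mk,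
    Finset.Nat.sum_antidiagonal_eq_sum_range_succ_mk]
  rw [smul_sub, Finset.smul_sum, smul_smul]
  have hsum1 : ∀ k ∈ Finset.range (n + 1),
      q ^ n • q ^ ((n : ℤ) - 2 * (k : ℤ)) • (D.G k * D.Gt (n - k)) =
        D.G k * ((q ^ 2) ^ (n - k) • D.Gt (n - k)) := by
    intro k hk
    rw [smul_smul, scal1' hq0 (Nat.lt_succ_iff.mp (Finset.mem_range.mp hk)), mul_smul_comm]
  rw [Finset.sum_congr rfl hsum1]
  cases n with
  | zero => simp [PowerSeries.coeff_zero_X_mul]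
  | succ m =>
    rw [PowerSeries.coeff_smul, PowerSeries.coeff_succ_X_mul]
    simp only [PowerSeries.coeff_mul, PowerSeries.coeff_mk,
      Finset.Nat.sum_antidiagonal_eq_sum_range_succ_mk]
    rw [Finset.smul_sum, Finset.smul_sum]
    have hsum2 : ∀ k ∈ Finset.range (m + 1),
        (q ^ (m+1) * (q * q ^ (((m+1 : ℕ) : ℤ) - 1 - 2 * (k : ℤ)))) •
            (D.Wm k * D.Wp ((m+1) - 1 - k))
          = (q^2) • (D.Wm k * ((q ^ 2) ^ (m - k) • D.Wp (m - k))) := by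
      intro k hk
      have hk' : k + 1 ≤ m + 1 := Finset.mem_range.mp hk
      rw [scal2' hq0 hk', mul_smul, mul_smul_comm]
      norm_num
    have hsum2' : ∀ k ∈ Finset.range (m + 1),
        (q ^ (m+1) * q) • q ^ (((m+1:ℕ) : ℤ) - 1 - 2 * (k : ℤ)) •
            (D.Wm k * D.Wp ((m+1) - 1 - k))
          = (q^2) • (D.Wm k * ((q ^ 2) ^ (m - k) • D.Wp (m - k))) := by
      intro k hk
      rw [smul_smul, mul_assoc]
      exact hsum2 k hk
    rw [Finset.sum_congr rfl hsum2']
    abel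

/-- `𝒢(t) = 𝒵∨(qt)(𝒢̃(q²t))⁻¹ + q²t·𝒲⁻(t)𝒲⁺(q²t)(𝒢̃(q²t))⁻¹` in the
power series ring in `t` over `𝒰_q^+`, the inverse being taken in the group of units of
the power series ring (the series `𝒢̃` has constant coefficient `1`, hence is
invertible). -/
theorem stmt19 {F : Type*} [Field F] (q : F) (hq0 : q ≠ 0)
    (hq : ∀ n : ℕ, 0 < n → q ^ n ≠ 1)
    {A : Type*} [Ring A] [Algebra F A] (D : AltData F q A) :
    (∃ u : (PowerSeries A)ˣ, (u : PowerSeries A) = serc (q ^ 2) D.Gt) ∧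
    ∀ u : (PowerSeries A)ˣ,
      (u : PowerSeries A) = serc (q ^ 2) D.Gt →
      ser D.G =
        serc q (Zv q D) * (↑u⁻¹ : PowerSeries A) +
          q ^ 2 • (PowerSeries.X * ser D.Wm * serc (q ^ 2) D.Wp * (↑u⁻¹ : PowerSeries A)) := by
  have hc : PowerSeries.constantCoeff (R := A) (serc (q ^ 2) D.Gt) = 1 := by
    simp [serc, D.hGt0, ← PowerSeries.coeff_zero_eq_constantCoeff_apply]
  refine ⟨unit_of_constantCoeff_one _ hc, ?_⟩
  intro u hu
  have hkey : ser D.G * (u : PowerSeries A) =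
      serc q (Zv q D) + (q : F) ^ 2 • (PowerSeries.X * ser D.Wm * serc (q ^ 2) D.Wp) := by
    rw [hu]; exact key19 q hq0 D
  calc ser D.G = (ser D.G * (u : PowerSeries A)) * (↑u⁻¹ : PowerSeries A) := by
        rw [mul_assoc, Units.mul_inv, mul_one]
  _ = _ := by rw [hkey, add_mul, smul_mul_assoc]
end
end
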